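/- arXiv:2106.06727 — 3 statements merged into one kernel-verified Lean document; each statement's English description precedes it below -/
import Mathlib

section
/- Every binary phylogenetic network obtained from the single-leaf network by a finite sequence of speciation events and m-type hybrid-speciation events is a tree-child network; moreover it admits a temporal labelling (an assignment of times to internal nodes compatible with the event order in which the two parents of each reticulation receive equal time and each tree edge strictly increases time). -/
/-- A (directed) phylogenetic-network-like graph on a finite set of
natural-number labelled vertices. -/
structure PNet where
  verts : Finset ℕ
  adj : ℕ → ℕ → Prop
  adjDec : DecidableRel adj
  adj_mem : ∀ u v, adj u v → u ∈ verts ∧ v ∈ verts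

attribute [instance] PNet.adjDec

namespace PNet

/-- In-degree of a vertex. -/
def indeg (N : PNet) (v : ℕ) : ℕ := (N.verts.filter fun u => N.adj u v).card

/-- Out-degree of a vertex. -/
def outdeg (N : PNet) (v : ℕ) : ℕ := (N.verts.filter fun w => N.adj v w).card

/-- A leaf is a vertex of out-degree 0. -/
def IsLeaf (N : PNet) (v : ℕ) : Prop := v ∈ N.verts ∧ N.outdeg v = 0

/-- A reticulation node is a vertex of in-degree 2. -/
def IsRetic (N : PNet) (v : ℕ) : Prop := v ∈ N.verts ∧ N.indeg v = 2

/-- A root is a vertex of in-degree 0. -/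
def IsRoot (N : PNet) (v : ℕ) : Prop := v ∈ N.verts ∧ N.indeg v = 0

/-- The digraph is acyclic. -/
def Acyclic (N : PNet) : Prop := ∀ v, ¬ Relation.TransGen N.adj v v

/-- A binary (rooted) phylogenetic network: acyclic, a root of in-degree 0 and
out-degree 2 from which all vertices are reachable, and every other vertex is a
tree node (in 1, out 2), a reticulation node (in 2, out 1) or a leaf (in 1, out 0). -/
def IsBinary (N : PNet) : Prop :=
  N.Acyclic ∧ ∃ ρ, N.IsRoot ρ ∧ N.outdeg ρ = 2 ∧
    (∀ v ∈ N.verts, Relation.ReflTransGen N.adj ρ v) ∧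
    (∀ v ∈ N.verts, v ≠ ρ →
      (N.indeg v = 1 ∧ N.outdeg v = 2) ∨ (N.indeg v = 2 ∧ N.outdeg v = 1) ∨
      (N.indeg v = 1 ∧ N.outdeg v = 0))

/-- Tree-child: every internal node has a child that is not a reticulation. -/
def TreeChild (N : PNet) : Prop :=
  ∀ v ∈ N.verts, N.outdeg v ≠ 0 → ∃ c, N.adj v c ∧ N.indeg c ≠ 2

/-- Stack-free: no edge joins two reticulation nodes. -/
def StackFree (N : PNet) : Prop :=
  ∀ u v, N.adj u v → ¬ (N.indeg u = 2 ∧ N.indeg v = 2)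

end PNet

namespace PNet

/-- The network consisting of a single leaf (one vertex, no edges). -/
def SingleLeaf (N : PNet) : Prop := ∃ v, N.verts = {v} ∧ ∀ u w, ¬ N.adj u w

/-- Speciation event: a leaf `x` is replaced by a tree node with two new leaf
children `a` and `b`. -/
def Speciation (N N' : PNet) : Prop :=
  ∃ x a b, N.IsLeaf x ∧ a ∉ N.verts ∧ b ∉ N.verts ∧ a ≠ b ∧
    N'.verts = insert a (insert b N.verts) ∧
    ∀ u v, N'.adj u v ↔ (N.adj u v ∨ (u = x ∧ v = a) ∨ (u = x ∧ v = b))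

/-- y-type merging event: two distinct leaves `x` and `y` (with distinct
parents) are glued into a reticulation node with in-edges from the former
parents of `x` and `y` and a single new leaf child `z`. -/
def YMerge (N N' : PNet) : Prop :=
  ∃ x y z px py, x ≠ y ∧ N.IsLeaf x ∧ N.IsLeaf y ∧ z ∉ N.verts ∧
    N.adj px x ∧ N.adj py y ∧ px ≠ py ∧
    N'.verts = insert z (N.verts \ {y}) ∧
    ∀ u v, N'.adj u v ↔
      ((N.adj u v ∧ v ≠ y) ∨ (u = py ∧ v = x) ∨ (u = x ∧ v = z))

/-- n-type (HGT) reticulation event: subdivide the pendant edges above two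
distinct leaves `x` and `y` with new nodes `u₀` and `v₀` and add the arc
`(u₀, v₀)`, making `v₀` a reticulation node; `x` and `y` remain leaves. -/
def HGT (N N' : PNet) : Prop :=
  ∃ x y u₀ v₀ px py, x ≠ y ∧ N.IsLeaf x ∧ N.IsLeaf y ∧
    N.adj px x ∧ N.adj py y ∧
    u₀ ∉ N.verts ∧ v₀ ∉ N.verts ∧ u₀ ≠ v₀ ∧
    N'.verts = insert u₀ (insert v₀ N.verts) ∧
    ∀ a b, N'.adj a b ↔
      ((N.adj a b ∧ b ≠ x ∧ b ≠ y) ∨ (a = px ∧ b = u₀) ∨ (a = py ∧ b = v₀) ∨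
        (a = u₀ ∧ b = x) ∨ (a = v₀ ∧ b = y) ∨ (a = u₀ ∧ b = v₀))

/-- m-type hybrid-speciation event: two distinct leaves `x` and `y` each become
tree nodes, with new leaf children `x'` resp. `y'` and with edges into a shared
new reticulation node `w`, which has a single new leaf child `z`. -/
def MType (N N' : PNet) : Prop :=
  ∃ x y x' y' w z, x ≠ y ∧ N.IsLeaf x ∧ N.IsLeaf y ∧
    x' ∉ N.verts ∧ y' ∉ N.verts ∧ w ∉ N.verts ∧ z ∉ N.verts ∧
    x' ≠ y' ∧ x' ≠ w ∧ x' ≠ z ∧ y' ≠ w ∧ y' ≠ z ∧ w ≠ z ∧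
    N'.verts = insert x' (insert y' (insert w (insert z N.verts))) ∧
    ∀ a b, N'.adj a b ↔
      (N.adj a b ∨ (a = x ∧ b = x') ∨ (a = x ∧ b = w) ∨
        (a = y ∧ b = y') ∨ (a = y ∧ b = w) ∨ (a = w ∧ b = z))

/-- Extinction event: delete a leaf `x` and suppress its resulting degree-two
parent `p` (when `p` is not the root). -/
def Extinct (N N' : PNet) : Prop :=
  ∃ x p c, N.IsLeaf x ∧ N.adj p x ∧ N.adj p c ∧ c ≠ x ∧
    ((N.indeg p = 0 ∧ N'.verts = N.verts \ {x} ∧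
        ∀ u v, N'.adj u v ↔ (N.adj u v ∧ v ≠ x)) ∨
     (∃ q, N.adj q p ∧ N'.verts = N.verts \ {x, p} ∧
        ∀ u v, N'.adj u v ↔
          ((N.adj u v ∧ u ≠ p ∧ v ≠ p ∧ v ≠ x) ∨ (u = q ∧ v = c))))

/-- Isomorphism of (leaf-unlabelled) network topologies. -/
def Iso (M N : PNet) : Prop :=
  ∃ f : ℕ → ℕ, Set.BijOn f ↑M.verts ↑N.verts ∧
    ∀ u v, u ∈ M.verts → v ∈ M.verts → (M.adj u v ↔ N.adj (f u) (f v))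

end PNet

namespace PNet

/-- A temporal labelling: an assignment of times to nodes such that both
endpoints of each hybrid edge get equal times, and the target of each
non-hybrid edge gets a strictly larger time than its source. -/
def Temporal (N : PNet) : Prop :=
  ∃ t : ℕ → ℝ, ∀ u v, N.adj u v →
    (N.indeg v = 2 → t u = t v) ∧ (N.indeg v ≠ 2 → t u < t v)

end PNet

namespace PNet

lemma not_adj_of_right (N : PNet) {u a : ℕ} (ha : a ∉ N.verts) : ¬ N.adj u a :=
  fun h => ha (N.adj_mem u a h).2

lemma not_adj_of_left (N : PNet) {a v : ℕ} (ha : a ∉ N.verts) : ¬ N.adj a v :=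
  fun h => ha (N.adj_mem a v h).1

lemma leaf_not_adj {N : PNet} {x : ℕ} (hx : N.IsLeaf x) (b : ℕ) : ¬ N.adj x b := by
  intro h
  have hb := (N.adj_mem x b h).2
  have hmem : b ∈ N.verts.filter fun w => N.adj x w := Finset.mem_filter.2 ⟨hb, h⟩
  have hpos : 0 < (N.verts.filter fun w => N.adj x w).card := Finset.card_pos.2 ⟨b, hmem⟩
  have h0 : (N.verts.filter fun w => N.adj x w).card = 0 := hx.2
  omega

lemma indeg_congr {N N' : PNet} {v : ℕ}
    (h : ∀ u, (u ∈ N'.verts ∧ N'.adj u v) ↔ (u ∈ N.verts ∧ N.adj u v)) :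
    N'.indeg v = N.indeg v := by
  have hf : N'.verts.filter (fun u => N'.adj u v) = N.verts.filter (fun u => N.adj u v) := by
    ext u
    simp only [Finset.mem_filter]
    exact h u
  simp only [indeg, hf]

lemma outdeg_congr {N N' : PNet} {v : ℕ}
    (h : ∀ w, (w ∈ N'.verts ∧ N'.adj v w) ↔ (w ∈ N.verts ∧ N.adj v w)) :
    N'.outdeg v = N.outdeg v := by
  have hf : N'.verts.filter (fun w => N'.adj v w) = N.verts.filter (fun w => N.adj v w) := by
    ext w
    simp only [Finset.mem_filter]
    exact h w
  simp only [outdeg, hf]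

lemma indeg_eq_one {N' : PNet} {v p : ℕ} (hp : p ∈ N'.verts)
    (h : ∀ u, N'.adj u v ↔ u = p) : N'.indeg v = 1 := by
  have hf : N'.verts.filter (fun u => N'.adj u v) = {p} := by
    ext u
    simp only [Finset.mem_filter, Finset.mem_singleton, h]
    constructor
    · rintro ⟨_, rfl⟩; rfl
    · rintro rfl; exact ⟨hp, rfl⟩
  simp only [indeg, hf, Finset.card_singleton]

lemma indeg_eq_two {N' : PNet} {v p q : ℕ} (hp : p ∈ N'.verts) (hq : q ∈ N'.verts)
    (hpq : p ≠ q) (h : ∀ u, N'.adj u v ↔ u = p ∨ u = q) : N'.indeg v = 2 := by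
  have hf : N'.verts.filter (fun u => N'.adj u v) = {p, q} := by
    ext u
    simp only [Finset.mem_filter, Finset.mem_insert, Finset.mem_singleton, h]
    constructor
    · rintro ⟨_, h'⟩; exact h'
    · rintro (rfl | rfl)
      · exact ⟨hp, Or.inl rfl⟩
      · exact ⟨hq, Or.inr rfl⟩
  rw [indeg, hf, Finset.card_insert_of_notMem (by simpa using hpq), Finset.card_singleton]

lemma outdeg_eq_zero {N' : PNet} {v : ℕ} (h : ∀ w, ¬ N'.adj v w) : N'.outdeg v = 0 := by
  have hf : N'.verts.filter (fun w => N'.adj v w) = ∅ := by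
    ext w
    simp only [Finset.mem_filter, Finset.notMem_empty, iff_false]
    rintro ⟨_, h'⟩
    exact h w h'
  simp only [outdeg, hf, Finset.card_empty]

lemma outdeg_ne_zero {N' : PNet} {v w : ℕ} (hw : w ∈ N'.verts) (h : N'.adj v w) :
    N'.outdeg v ≠ 0 := by
  have hmem : w ∈ N'.verts.filter fun u => N'.adj v u := Finset.mem_filter.2 ⟨hw, h⟩
  have hpos : 0 < (N'.verts.filter fun u => N'.adj v u).card := Finset.card_pos.2 ⟨w, hmem⟩
  simp only [outdeg]
  omega

/-- The inductive invariant: a temporal labelling in which every leaf has the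
common time `T`, and every internal vertex has time strictly below `T`. -/
def Inv (N : PNet) : Prop :=
  ∃ (t : ℕ → ℝ) (T : ℝ),
    (∀ u v, N.adj u v → (N.indeg v = 2 → t u = t v) ∧ (N.indeg v ≠ 2 → t u < t v)) ∧
    (∀ v, N.IsLeaf v → t v = T) ∧
    (∀ v ∈ N.verts, ¬ N.IsLeaf v → t v < T)

lemma Inv.leaf_indeg_ne_two {N : PNet} (hI : Inv N) {v : ℕ} (hv : N.IsLeaf v) :
    N.indeg v ≠ 2 := by
  obtain ⟨t, T, ht, hlf, hin⟩ := hI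
  intro h2
  have hpos : 0 < (N.verts.filter fun u => N.adj u v).card := by
    have : (N.verts.filter fun u => N.adj u v).card = 2 := h2
    omega
  obtain ⟨u, hu⟩ := Finset.card_pos.1 hpos
  rw [Finset.mem_filter] at hu
  have hul : ¬ N.IsLeaf u := fun hl => leaf_not_adj hl v hu.2
  have h1 := (ht u v hu.2).1 h2
  have h3 : t u < T := hin u hu.1 hul
  rw [hlf v hv] at h1
  linarith

lemma base_case {N : PNet} (h : SingleLeaf N) : N.TreeChild ∧ Inv N := by
  obtain ⟨v, hV, hadj⟩ := h
  have hout : ∀ u, N.outdeg u = 0 := fun u => outdeg_eq_zero (fun w => hadj u w)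
  refine ⟨fun u hu huo => absurd (hout u) huo, ?_⟩
  exact ⟨fun _ => 0, 0, fun u v h => absurd h (hadj u v), fun _ _ => rfl,
    fun u hu hnl => absurd ⟨hu, hout u⟩ hnl⟩

lemma step_spec {N N' : PNet} (h : Speciation N N') (hTC : N.TreeChild) (hI : Inv N) :
    N'.TreeChild ∧ Inv N' := by
  classical
  obtain ⟨x, a, b, hx, ha, hb, hab, hV, hA⟩ := h
  have hxV : x ∈ N.verts := hx.1
  have hxa : x ≠ a := fun h' => ha (h' ▸ hxV)
  have hxb : x ≠ b := fun h' => hb (h' ▸ hxV)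
  have haV' : a ∈ N'.verts := by rw [hV]; exact Finset.mem_insert_self _ _
  have hbV' : b ∈ N'.verts := by
    rw [hV]; exact Finset.mem_insert_of_mem (Finset.mem_insert_self _ _)
  have hmem' : ∀ v ∈ N.verts, v ∈ N'.verts := fun v hv => by
    rw [hV]; exact Finset.mem_insert_of_mem (Finset.mem_insert_of_mem hv)
  have hxV' : x ∈ N'.verts := hmem' x hxV
  have hind : ∀ v ∈ N.verts, N'.indeg v = N.indeg v := by
    intro v hv
    apply indeg_congr
    intro u
    constructor
    · rintro ⟨hu, hadj⟩
      rw [hA] at hadj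
      rcases hadj with h' | ⟨rfl, rfl⟩ | ⟨rfl, rfl⟩
      · exact ⟨(N.adj_mem u v h').1, h'⟩
      · exact absurd hv ha
      · exact absurd hv hb
    · rintro ⟨hu, hadj⟩
      exact ⟨hmem' u hu, (hA u v).2 (Or.inl hadj)⟩
  have hout : ∀ v, v ≠ x → N'.outdeg v = N.outdeg v := by
    intro v hvx
    apply outdeg_congr
    intro w
    constructor
    · rintro ⟨hw, hadj⟩
      rw [hA] at hadj
      rcases hadj with h' | ⟨rfl, rfl⟩ | ⟨rfl, rfl⟩
      · exact ⟨(N.adj_mem v w h').2, h'⟩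
      · exact absurd rfl hvx
      · exact absurd rfl hvx
    · rintro ⟨hw, hadj⟩
      exact ⟨hmem' w hw, (hA v w).2 (Or.inl hadj)⟩
  have hadj_a : ∀ u, N'.adj u a ↔ u = x := by
    intro u
    rw [hA]
    constructor
    · rintro (h' | ⟨rfl, -⟩ | ⟨rfl, h'⟩)
      · exact absurd h' (N.not_adj_of_right ha)
      · rfl
      · exact absurd h' hab
    · rintro rfl; exact Or.inr (Or.inl ⟨rfl, rfl⟩)
  have hadj_b : ∀ u, N'.adj u b ↔ u = x := by
    intro u
    rw [hA]
    constructor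
    · rintro (h' | ⟨rfl, h'⟩ | ⟨rfl, -⟩)
      · exact absurd h' (N.not_adj_of_right hb)
      · exact absurd h'.symm hab
      · rfl
    · rintro rfl; exact Or.inr (Or.inr ⟨rfl, rfl⟩)
  have hno_a : ∀ w, ¬ N'.adj a w := by
    intro w h'
    rw [hA] at h'
    rcases h' with h' | ⟨rfl, _⟩ | ⟨rfl, _⟩
    · exact N.not_adj_of_left ha h'
    · exact hxa rfl
    · exact hxa rfl
  have hno_b : ∀ w, ¬ N'.adj b w := by
    intro w h'
    rw [hA] at h'
    rcases h' with h' | ⟨rfl, _⟩ | ⟨rfl, _⟩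
    · exact N.not_adj_of_left hb h'
    · exact hxb rfl
    · exact hxb rfl
  have hinda : N'.indeg a = 1 := indeg_eq_one hxV' hadj_a
  have hindb : N'.indeg b = 1 := indeg_eq_one hxV' hadj_b
  have houta : N'.outdeg a = 0 := outdeg_eq_zero hno_a
  have houtb : N'.outdeg b = 0 := outdeg_eq_zero hno_b
  have hadjxa : N'.adj x a := (hA x a).2 (Or.inr (Or.inl ⟨rfl, rfl⟩))
  have hadjxb : N'.adj x b := (hA x b).2 (Or.inr (Or.inr ⟨rfl, rfl⟩))
  have houtx : N'.outdeg x ≠ 0 := outdeg_ne_zero haV' hadjxa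
  have hTC' : N'.TreeChild := by
    intro v hv hvo
    rw [hV, Finset.mem_insert, Finset.mem_insert] at hv
    rcases hv with rfl | rfl | hv
    · exact absurd houta hvo
    · exact absurd houtb hvo
    · by_cases hvx : v = x
      · subst hvx; exact ⟨a, hadjxa, by rw [hinda]; omega⟩
      · rw [hout v hvx] at hvo
        obtain ⟨c, hc, hc2⟩ := hTC v hv hvo
        have hcV := (N.adj_mem v c hc).2
        exact ⟨c, (hA v c).2 (Or.inl hc), by rw [hind c hcV]; exact hc2⟩
  have hne2 : ∀ v, N.IsLeaf v → N.indeg v ≠ 2 := fun v hv => hI.leaf_indeg_ne_two hv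
  obtain ⟨t, T, ht, hlf, hin⟩ := hI
  refine ⟨hTC', ?_⟩
  set t' : ℕ → ℝ := fun v =>
    if v = a then T + 1 else if v = b then T + 1 else if v = x then T
    else if N.IsLeaf v then T + 1 else t v with ht'def
  have hta : t' a = T + 1 := by simp [ht'def]
  have htb : t' b = T + 1 := by
    have h1 : b ≠ a := Ne.symm hab
    simp [ht'def, h1]
  have htx : t' x = T := by simp [ht'def, hxa, hxb]
  have htleaf : ∀ v ∈ N.verts, N.IsLeaf v → v ≠ x → t' v = T + 1 := by
    intro v hv hl hvx
    have hva : v ≠ a := fun h' => ha (h' ▸ hv)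
    have hvb : v ≠ b := fun h' => hb (h' ▸ hv)
    simp [ht'def, hva, hvb, hvx, hl]
  have htnon : ∀ v ∈ N.verts, ¬ N.IsLeaf v → t' v = t v := by
    intro v hv hnl
    have hva : v ≠ a := fun h' => ha (h' ▸ hv)
    have hvb : v ≠ b := fun h' => hb (h' ▸ hv)
    have hvx : v ≠ x := fun h' => hnl (h' ▸ hx)
    simp [ht'def, hva, hvb, hvx, hnl]
  refine ⟨t', T + 1, ?_, ?_, ?_⟩
  · intro u v hadj
    rw [hA] at hadj
    rcases hadj with h' | ⟨rfl, rfl⟩ | ⟨rfl, rfl⟩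
    · have huV := (N.adj_mem _ _ h').1
      have hvV := (N.adj_mem _ _ h').2
      have hul : ¬ N.IsLeaf u := fun hl => leaf_not_adj hl _ h'
      have htu : t' u = t u := htnon u huV hul
      have hindv : N'.indeg v = N.indeg v := hind v hvV
      by_cases hvl : N.IsLeaf v
      · have h2 : N.indeg v ≠ 2 := hne2 v hvl
        rw [hindv]
        refine ⟨fun h'' => absurd h'' h2, fun _ => ?_⟩
        have h3 : t u < T := hin u huV hul
        by_cases hvx : v = x
        · subst hvx; rw [htu, htx]; exact h3
        · rw [htu, htleaf v hvV hvl hvx]; linarith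
      · have hres := ht u v h'
        rw [hindv, htu, htnon v hvV hvl]
        exact hres
    · rw [hinda]
      exact ⟨fun h'' => by omega, fun _ => by rw [htx, hta]; linarith⟩
    · rw [hindb]
      exact ⟨fun h'' => by omega, fun _ => by rw [htx, htb]; linarith⟩
  · intro v hv
    have hvV := hv.1
    rw [hV, Finset.mem_insert, Finset.mem_insert] at hvV
    rcases hvV with rfl | rfl | hvV
    · exact hta
    · exact htb
    · have hvx : v ≠ x := fun h' => houtx (h' ▸ hv.2)
      have hl : N.IsLeaf v := ⟨hvV, by rw [← hout v hvx]; exact hv.2⟩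
      exact htleaf v hvV hl hvx
  · intro v hv hnl
    rw [hV, Finset.mem_insert, Finset.mem_insert] at hv
    rcases hv with rfl | rfl | hv
    · exact absurd ⟨haV', houta⟩ hnl
    · exact absurd ⟨hbV', houtb⟩ hnl
    · by_cases hvx : v = x
      · subst hvx; rw [htx]; linarith
      · have hnlN : ¬ N.IsLeaf v := fun hl =>
          hnl ⟨hmem' v hv, by rw [hout v hvx]; exact hl.2⟩
        rw [htnon v hv hnlN]
        have := hin v hv hnlN
        linarith

lemma step_mtype {N N' : PNet} (h : MType N N') (hTC : N.TreeChild) (hI : Inv N) :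
    N'.TreeChild ∧ Inv N' := by
  classical
  obtain ⟨x, y, x', y', w, z, hxy, hx, hy, hx', hy', hw, hz,
    hxy', hxw', hxz', hyw', hyz', hwz, hV, hA⟩ := h
  have hxV : x ∈ N.verts := hx.1
  have hyV : y ∈ N.verts := hy.1
  have hnex' : ∀ v ∈ N.verts, v ≠ x' := fun v hv h' => hx' (h' ▸ hv)
  have hney' : ∀ v ∈ N.verts, v ≠ y' := fun v hv h' => hy' (h' ▸ hv)
  have hnew : ∀ v ∈ N.verts, v ≠ w := fun v hv h' => hw (h' ▸ hv)
  have hnez : ∀ v ∈ N.verts, v ≠ z := fun v hv h' => hz (h' ▸ hv)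
  have hmem' : ∀ v ∈ N.verts, v ∈ N'.verts := fun v hv => by
    rw [hV]
    exact Finset.mem_insert_of_mem (Finset.mem_insert_of_mem
      (Finset.mem_insert_of_mem (Finset.mem_insert_of_mem hv)))
  have hx'V' : x' ∈ N'.verts := by rw [hV]; exact Finset.mem_insert_self _ _
  have hy'V' : y' ∈ N'.verts := by
    rw [hV]; exact Finset.mem_insert_of_mem (Finset.mem_insert_self _ _)
  have hwV' : w ∈ N'.verts := by
    rw [hV]
    exact Finset.mem_insert_of_mem (Finset.mem_insert_of_mem (Finset.mem_insert_self _ _))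
  have hzV' : z ∈ N'.verts := by
    rw [hV]
    exact Finset.mem_insert_of_mem (Finset.mem_insert_of_mem
      (Finset.mem_insert_of_mem (Finset.mem_insert_self _ _)))
  have hxV' : x ∈ N'.verts := hmem' x hxV
  have hyV' : y ∈ N'.verts := hmem' y hyV
  have hind : ∀ v ∈ N.verts, N'.indeg v = N.indeg v := by
    intro v hv
    apply indeg_congr
    intro u
    constructor
    · rintro ⟨hu, hadj⟩
      rw [hA] at hadj
      rcases hadj with h' | ⟨rfl, rfl⟩ | ⟨rfl, rfl⟩ | ⟨rfl, rfl⟩ | ⟨rfl, rfl⟩ | ⟨rfl, rfl⟩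
      · exact ⟨(N.adj_mem u v h').1, h'⟩
      · exact absurd hv hx'
      · exact absurd hv hw
      · exact absurd hv hy'
      · exact absurd hv hw
      · exact absurd hv hz
    · rintro ⟨hu, hadj⟩
      exact ⟨hmem' u hu, (hA u v).2 (Or.inl hadj)⟩
  have hout : ∀ v ∈ N.verts, v ≠ x → v ≠ y → N'.outdeg v = N.outdeg v := by
    intro v hv hvx hvy
    apply outdeg_congr
    intro b
    constructor
    · rintro ⟨hb, hadj⟩
      rw [hA] at hadj
      rcases hadj with h' | ⟨rfl, rfl⟩ | ⟨rfl, rfl⟩ | ⟨rfl, rfl⟩ | ⟨rfl, rfl⟩ | ⟨rfl, rfl⟩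
      · exact ⟨(N.adj_mem v b h').2, h'⟩
      · exact absurd rfl hvx
      · exact absurd rfl hvx
      · exact absurd rfl hvy
      · exact absurd rfl hvy
      · exact absurd hv hw
    · rintro ⟨hb, hadj⟩
      exact ⟨hmem' b hb, (hA v b).2 (Or.inl hadj)⟩
  have hadj_x' : ∀ u, N'.adj u x' ↔ u = x := by
    intro u
    rw [hA]
    constructor
    · rintro (h' | ⟨rfl, -⟩ | ⟨rfl, h'⟩ | ⟨rfl, h'⟩ | ⟨rfl, h'⟩ | ⟨rfl, h'⟩)
      · exact absurd h' (N.not_adj_of_right hx')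
      · rfl
      · exact absurd h' hxw'
      · exact absurd h' hxy'
      · exact absurd h' hxw'
      · exact absurd h' hxz'
    · rintro rfl; exact Or.inr (Or.inl ⟨rfl, rfl⟩)
  have hadj_y' : ∀ u, N'.adj u y' ↔ u = y := by
    intro u
    rw [hA]
    constructor
    · rintro (h' | ⟨rfl, h'⟩ | ⟨rfl, h'⟩ | ⟨rfl, -⟩ | ⟨rfl, h'⟩ | ⟨rfl, h'⟩)
      · exact absurd h' (N.not_adj_of_right hy')
      · exact absurd h'.symm hxy'
      · exact absurd h' hyw'
      · rfl
      · exact absurd h' hyw'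
      · exact absurd h' hyz'
    · rintro rfl; exact Or.inr (Or.inr (Or.inr (Or.inl ⟨rfl, rfl⟩)))
  have hadj_w : ∀ u, N'.adj u w ↔ u = x ∨ u = y := by
    intro u
    rw [hA]
    constructor
    · rintro (h' | ⟨rfl, h'⟩ | ⟨rfl, -⟩ | ⟨rfl, h'⟩ | ⟨rfl, -⟩ | ⟨rfl, h'⟩)
      · exact absurd h' (N.not_adj_of_right hw)
      · exact absurd h'.symm hxw'
      · exact Or.inl rfl
      · exact absurd h'.symm hyw'
      · exact Or.inr rfl
      · exact absurd h' hwz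
    · rintro (rfl | rfl)
      · exact Or.inr (Or.inr (Or.inl ⟨rfl, rfl⟩))
      · exact Or.inr (Or.inr (Or.inr (Or.inr (Or.inl ⟨rfl, rfl⟩))))
  have hadj_z : ∀ u, N'.adj u z ↔ u = w := by
    intro u
    rw [hA]
    constructor
    · rintro (h' | ⟨rfl, h'⟩ | ⟨rfl, h'⟩ | ⟨rfl, h'⟩ | ⟨rfl, h'⟩ | ⟨rfl, -⟩)
      · exact absurd h' (N.not_adj_of_right hz)
      · exact absurd h'.symm hxz'
      · exact absurd h'.symm hwz
      · exact absurd h'.symm hyz'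
      · exact absurd h'.symm hwz
      · rfl
    · rintro rfl; exact Or.inr (Or.inr (Or.inr (Or.inr (Or.inr ⟨rfl, rfl⟩))))
  have hno_x' : ∀ b, ¬ N'.adj x' b := by
    intro b h'
    rw [hA] at h'
    rcases h' with h' | ⟨rfl, _⟩ | ⟨rfl, _⟩ | ⟨rfl, _⟩ | ⟨rfl, _⟩ | ⟨rfl, _⟩
    · exact N.not_adj_of_left hx' h'
    · exact hx' hxV
    · exact hx' hxV
    · exact hx' hyV
    · exact hx' hyV
    · exact hxw' rfl
  have hno_y' : ∀ b, ¬ N'.adj y' b := by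
    intro b h'
    rw [hA] at h'
    rcases h' with h' | ⟨rfl, _⟩ | ⟨rfl, _⟩ | ⟨rfl, _⟩ | ⟨rfl, _⟩ | ⟨rfl, _⟩
    · exact N.not_adj_of_left hy' h'
    · exact hy' hxV
    · exact hy' hxV
    · exact hy' hyV
    · exact hy' hyV
    · exact hyw' rfl
  have hno_z : ∀ b, ¬ N'.adj z b := by
    intro b h'
    rw [hA] at h'
    rcases h' with h' | ⟨rfl, _⟩ | ⟨rfl, _⟩ | ⟨rfl, _⟩ | ⟨rfl, _⟩ | ⟨rfl, _⟩
    · exact N.not_adj_of_left hz h'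
    · exact hz hxV
    · exact hz hxV
    · exact hz hyV
    · exact hz hyV
    · exact hwz rfl.symm
  have hindx' : N'.indeg x' = 1 := indeg_eq_one hxV' hadj_x'
  have hindy' : N'.indeg y' = 1 := indeg_eq_one hyV' hadj_y'
  have hindw : N'.indeg w = 2 := indeg_eq_two hxV' hyV' hxy hadj_w
  have hindz : N'.indeg z = 1 := indeg_eq_one hwV' hadj_z
  have houtx' : N'.outdeg x' = 0 := outdeg_eq_zero hno_x'
  have houty' : N'.outdeg y' = 0 := outdeg_eq_zero hno_y'
  have houtz : N'.outdeg z = 0 := outdeg_eq_zero hno_z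
  have hadjxx' : N'.adj x x' := (hA x x').2 (Or.inr (Or.inl ⟨rfl, rfl⟩))
  have hadjxw : N'.adj x w := (hA x w).2 (Or.inr (Or.inr (Or.inl ⟨rfl, rfl⟩)))
  have hadjyy' : N'.adj y y' := (hA y y').2 (Or.inr (Or.inr (Or.inr (Or.inl ⟨rfl, rfl⟩))))
  have hadjyw : N'.adj y w :=
    (hA y w).2 (Or.inr (Or.inr (Or.inr (Or.inr (Or.inl ⟨rfl, rfl⟩)))))
  have hadjwz : N'.adj w z :=
    (hA w z).2 (Or.inr (Or.inr (Or.inr (Or.inr (Or.inr ⟨rfl, rfl⟩)))))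
  have houtx : N'.outdeg x ≠ 0 := outdeg_ne_zero hx'V' hadjxx'
  have houty : N'.outdeg y ≠ 0 := outdeg_ne_zero hy'V' hadjyy'
  have houtw : N'.outdeg w ≠ 0 := outdeg_ne_zero hzV' hadjwz
  have hTC' : N'.TreeChild := by
    intro v hv hvo
    rw [hV, Finset.mem_insert, Finset.mem_insert, Finset.mem_insert,
      Finset.mem_insert] at hv
    rcases hv with rfl | rfl | rfl | rfl | hv
    · exact absurd houtx' hvo
    · exact absurd houty' hvo
    · exact ⟨z, hadjwz, by rw [hindz]; omega⟩
    · exact absurd houtz hvo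
    · by_cases hvx : v = x
      · subst hvx; exact ⟨x', hadjxx', by rw [hindx']; omega⟩
      · by_cases hvy : v = y
        · subst hvy; exact ⟨y', hadjyy', by rw [hindy']; omega⟩
        · rw [hout v hv hvx hvy] at hvo
          obtain ⟨c, hc, hc2⟩ := hTC v hv hvo
          have hcV := (N.adj_mem v c hc).2
          exact ⟨c, (hA v c).2 (Or.inl hc), by rw [hind c hcV]; exact hc2⟩
  have hne2 : ∀ v, N.IsLeaf v → N.indeg v ≠ 2 := fun v hv => hI.leaf_indeg_ne_two hv
  obtain ⟨t, T, ht, hlf, hin⟩ := hI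
  refine ⟨hTC', ?_⟩
  set t' : ℕ → ℝ := fun v =>
    if v = x' then T + 1 else if v = y' then T + 1 else if v = z then T + 1
    else if v = w then T else if v = x then T else if v = y then T
    else if N.IsLeaf v then T + 1 else t v with ht'def
  have htx' : t' x' = T + 1 := by simp [ht'def]
  have hty' : t' y' = T + 1 := by
    have h1 : y' ≠ x' := Ne.symm hxy'
    simp [ht'def, h1]
  have htz : t' z = T + 1 := by
    have h1 : z ≠ x' := Ne.symm hxz'
    have h2 : z ≠ y' := Ne.symm hyz'
    simp [ht'def, h1, h2]
  have htw : t' w = T := by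
    have h1 : w ≠ x' := Ne.symm hxw'
    have h2 : w ≠ y' := Ne.symm hyw'
    simp [ht'def, h1, h2, hwz]
  have htx : t' x = T := by
    simp [ht'def, hnex' x hxV, hney' x hxV, hnez x hxV, hnew x hxV]
  have hty : t' y = T := by
    have h1 : y ≠ x := Ne.symm hxy
    simp [ht'def, hnex' y hyV, hney' y hyV, hnez y hyV, hnew y hyV, h1]
  have htleaf : ∀ v ∈ N.verts, N.IsLeaf v → v ≠ x → v ≠ y → t' v = T + 1 := by
    intro v hv hl hvx hvy
    simp [ht'def, hnex' v hv, hney' v hv, hnez v hv, hnew v hv, hvx, hvy, hl]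
  have htnon : ∀ v ∈ N.verts, ¬ N.IsLeaf v → t' v = t v := by
    intro v hv hnl
    have hvx : v ≠ x := fun h' => hnl (h' ▸ hx)
    have hvy : v ≠ y := fun h' => hnl (h' ▸ hy)
    simp [ht'def, hnex' v hv, hney' v hv, hnez v hv, hnew v hv, hvx, hvy, hnl]
  refine ⟨t', T + 1, ?_, ?_, ?_⟩
  · intro u v hadj
    rw [hA] at hadj
    rcases hadj with h' | ⟨rfl, rfl⟩ | ⟨rfl, rfl⟩ | ⟨rfl, rfl⟩ | ⟨rfl, rfl⟩ | ⟨rfl, rfl⟩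
    · have huV := (N.adj_mem _ _ h').1
      have hvV := (N.adj_mem _ _ h').2
      have hul : ¬ N.IsLeaf u := fun hl => leaf_not_adj hl _ h'
      have htu : t' u = t u := htnon u huV hul
      have hindv : N'.indeg v = N.indeg v := hind v hvV
      by_cases hvl : N.IsLeaf v
      · have h2 : N.indeg v ≠ 2 := hne2 v hvl
        rw [hindv]
        refine ⟨fun h'' => absurd h'' h2, fun _ => ?_⟩
        have h3 : t u < T := hin u huV hul
        by_cases hvx : v = x
        · subst hvx; rw [htu, htx]; exact h3
        · by_cases hvy : v = y
          · subst hvy; rw [htu, hty]; exact h3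
          · rw [htu, htleaf v hvV hvl hvx hvy]; linarith
      · have hres := ht u v h'
        rw [hindv, htu, htnon v hvV hvl]
        exact hres
    · rw [hindx']
      exact ⟨fun h'' => by omega, fun _ => by rw [htx, htx']; linarith⟩
    · rw [hindw]
      exact ⟨fun _ => by rw [htx, htw], fun h'' => absurd rfl h''⟩
    · rw [hindy']
      exact ⟨fun h'' => by omega, fun _ => by rw [hty, hty']; linarith⟩
    · rw [hindw]
      exact ⟨fun _ => by rw [hty, htw], fun h'' => absurd rfl h''⟩
    · rw [hindz]
      exact ⟨fun h'' => by omega, fun _ => by rw [htw, htz]; linarith⟩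
  · intro v hv
    have hvV := hv.1
    rw [hV, Finset.mem_insert, Finset.mem_insert, Finset.mem_insert,
      Finset.mem_insert] at hvV
    rcases hvV with rfl | rfl | rfl | rfl | hvV
    · exact htx'
    · exact hty'
    · exact absurd hv.2 houtw
    · exact htz
    · have hvx : v ≠ x := fun h' => houtx (h' ▸ hv.2)
      have hvy : v ≠ y := fun h' => houty (h' ▸ hv.2)
      have hl : N.IsLeaf v := ⟨hvV, by rw [← hout v hvV hvx hvy]; exact hv.2⟩
      exact htleaf v hvV hl hvx hvy
  · intro v hv hnl
    rw [hV, Finset.mem_insert, Finset.mem_insert, Finset.mem_insert,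
      Finset.mem_insert] at hv
    rcases hv with rfl | rfl | rfl | rfl | hv
    · exact absurd ⟨hx'V', houtx'⟩ hnl
    · exact absurd ⟨hy'V', houty'⟩ hnl
    · rw [htw]; linarith
    · exact absurd ⟨hzV', houtz⟩ hnl
    · by_cases hvx : v = x
      · subst hvx; rw [htx]; linarith
      · by_cases hvy : v = y
        · subst hvy; rw [hty]; linarith
        · have hnlN : ¬ N.IsLeaf v := fun hl =>
            hnl ⟨hmem' v hv, by rw [hout v hv hvx hvy]; exact hl.2⟩
          rw [htnon v hv hnlN]
          have := hin v hv hnlN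
          linarith

end PNet

open PNet in
/-- Every network obtained from the single-leaf network by speciation events
and m-type hybrid-speciation events is tree-child and admits a temporal
labelling. -/
theorem stmt9 (N₀ N : PNet) (h0 : SingleLeaf N₀)
    (hgen : Relation.ReflTransGen (fun A B => Speciation A B ∨ MType A B) N₀ N) :
    N.TreeChild ∧ N.Temporal := by
  have key : N.TreeChild ∧ Inv N := by
    induction hgen with
    | refl => exact base_case h0
    | tail hs hstep ih =>
      rcases hstep with h | h
      · exact step_spec h ih.1 ih.2
      · exact step_mtype h ih.1 ih.2
  obtain ⟨t, T, ht, -, -⟩ := key.2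
  exact ⟨key.1, t, ht⟩
end

section
/- Any binary phylogenetic network can be generated from the single-leaf network by a finite sequence of speciation events, n-type (HGT) reticulation events, and extinction events (removal of a leaf followed by suppression of its degree-2 parent). -/
namespace PNet

section Helpers

variable {N : PNet}

lemma adj_left {u v : ℕ} (h : N.adj u v) : u ∈ N.verts := (N.adj_mem u v h).1
lemma adj_right {u v : ℕ} (h : N.adj u v) : v ∈ N.verts := (N.adj_mem u v h).2

lemma no_out {v : ℕ} (h : N.outdeg v = 0) : ∀ w, ¬ N.adj v w := by
  intro w hw
  have hmem : w ∈ N.verts.filter (fun w => N.adj v w) :=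
    Finset.mem_filter.2 ⟨adj_right hw, hw⟩
  simp only [outdeg, Finset.card_eq_zero] at h
  rw [h] at hmem
  exact absurd hmem (Finset.notMem_empty w)

lemma no_in {v : ℕ} (h : N.indeg v = 0) : ∀ u, ¬ N.adj u v := by
  intro u hu
  have hmem : u ∈ N.verts.filter (fun u => N.adj u v) :=
    Finset.mem_filter.2 ⟨adj_left hu, hu⟩
  simp only [indeg, Finset.card_eq_zero] at h
  rw [h] at hmem
  exact absurd hmem (Finset.notMem_empty u)

lemma out_unique {v c : ℕ} (h : N.outdeg v = 1) (hc : N.adj v c) :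
    ∀ w, N.adj v w → w = c := by
  simp only [outdeg, Finset.card_eq_one] at h
  obtain ⟨a, ha⟩ := h
  have hcmem : c ∈ N.verts.filter (fun w => N.adj v w) :=
    Finset.mem_filter.2 ⟨adj_right hc, hc⟩
  intro w hw
  have hwmem : w ∈ N.verts.filter (fun w => N.adj v w) :=
    Finset.mem_filter.2 ⟨adj_right hw, hw⟩
  rw [ha, Finset.mem_singleton] at hcmem hwmem
  rw [hwmem, hcmem]

lemma in_unique {v p : ℕ} (h : N.indeg v = 1) (hp : N.adj p v) :
    ∀ u, N.adj u v → u = p := by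
  simp only [indeg, Finset.card_eq_one] at h
  obtain ⟨a, ha⟩ := h
  have hcmem : p ∈ N.verts.filter (fun u => N.adj u v) :=
    Finset.mem_filter.2 ⟨adj_left hp, hp⟩
  intro u hu
  have hwmem : u ∈ N.verts.filter (fun u => N.adj u v) :=
    Finset.mem_filter.2 ⟨adj_left hu, hu⟩
  rw [ha, Finset.mem_singleton] at hcmem hwmem
  rw [hwmem, hcmem]

lemma in_two {v p1 p2 : ℕ} (h : N.indeg v = 2) (h1 : N.adj p1 v) (h2 : N.adj p2 v)
    (hne : p1 ≠ p2) : ∀ u, N.adj u v → u = p1 ∨ u = p2 := by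
  have hsub : ({p1, p2} : Finset ℕ) ⊆ N.verts.filter (fun u => N.adj u v) := by
    intro x hx
    rcases Finset.mem_insert.1 hx with rfl | hx
    · exact Finset.mem_filter.2 ⟨adj_left h1, h1⟩
    · rw [Finset.mem_singleton] at hx
      subst hx
      exact Finset.mem_filter.2 ⟨adj_left h2, h2⟩
  have hcard : (N.verts.filter (fun u => N.adj u v)).card ≤ ({p1, p2} : Finset ℕ).card := by
    rw [Finset.card_insert_of_notMem (by simp [hne]), Finset.card_singleton]
    simp only [indeg] at h
    omega
  have heq := Finset.eq_of_subset_of_card_le hsub hcard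
  intro u hu
  have : u ∈ ({p1, p2} : Finset ℕ) := heq ▸ Finset.mem_filter.2 ⟨adj_left hu, hu⟩
  simpa using this

lemma out_two {v a b : ℕ} (h : N.outdeg v = 2) (h1 : N.adj v a) (h2 : N.adj v b)
    (hne : a ≠ b) : ∀ c, N.adj v c → c = a ∨ c = b := by
  have hsub : ({a, b} : Finset ℕ) ⊆ N.verts.filter (fun w => N.adj v w) := by
    intro x hx
    rcases Finset.mem_insert.1 hx with rfl | hx
    · exact Finset.mem_filter.2 ⟨adj_right h1, h1⟩
    · rw [Finset.mem_singleton] at hx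
      subst hx
      exact Finset.mem_filter.2 ⟨adj_right h2, h2⟩
  have hcard : (N.verts.filter (fun w => N.adj v w)).card ≤ ({a, b} : Finset ℕ).card := by
    rw [Finset.card_insert_of_notMem (by simp [hne]), Finset.card_singleton]
    simp only [outdeg] at h
    omega
  have heq := Finset.eq_of_subset_of_card_le hsub hcard
  intro c hc
  have : c ∈ ({a, b} : Finset ℕ) := heq ▸ Finset.mem_filter.2 ⟨adj_right hc, hc⟩
  simpa using this

lemma in_two_exists {v : ℕ} (h : N.indeg v = 2) :
    ∃ p1 p2, p1 ≠ p2 ∧ N.adj p1 v ∧ N.adj p2 v := by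
  simp only [indeg] at h
  obtain ⟨a, b, hab, hs⟩ := Finset.card_eq_two.1 h
  have ha : a ∈ N.verts.filter (fun u => N.adj u v) := by rw [hs]; simp
  have hb : b ∈ N.verts.filter (fun u => N.adj u v) := by rw [hs]; simp
  exact ⟨a, b, hab, (Finset.mem_filter.1 ha).2, (Finset.mem_filter.1 hb).2⟩

lemma out_two_exists {v : ℕ} (h : N.outdeg v = 2) :
    ∃ a b, a ≠ b ∧ N.adj v a ∧ N.adj v b := by
  simp only [outdeg] at h
  obtain ⟨a, b, hab, hs⟩ := Finset.card_eq_two.1 h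
  have ha : a ∈ N.verts.filter (fun w => N.adj v w) := by rw [hs]; simp
  have hb : b ∈ N.verts.filter (fun w => N.adj v w) := by rw [hs]; simp
  exact ⟨a, b, hab, (Finset.mem_filter.1 ha).2, (Finset.mem_filter.1 hb).2⟩

lemma out_exists {v : ℕ} (h : N.outdeg v ≠ 0) : ∃ c, N.adj v c := by
  simp only [outdeg] at h
  obtain ⟨c, hc⟩ := Finset.card_ne_zero.1 h
  exact ⟨c, (Finset.mem_filter.1 hc).2⟩

lemma out_one_exists {v : ℕ} (h : N.outdeg v = 1) : ∃ c, N.adj v c :=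
  out_exists (by omega)

lemma adj_ne_self (hac : N.Acyclic) {u : ℕ} (h : N.adj u u) : False :=
  hac u (Relation.TransGen.single h)

lemma acyclic_extend (P : PNet) (S : ℕ → Prop)
    (hsink : ∀ b, S b → ∀ c, ¬ P.adj b c)
    (hsub : ∀ a b, P.adj a b → N.adj a b ∨ S b)
    (hN : N.Acyclic) : P.Acyclic := by
  have key : ∀ a b, Relation.TransGen P.adj a b → Relation.TransGen N.adj a b ∨ S b := by
    intro a b h
    induction h with
    | single h => exact (hsub _ _ h).imp Relation.TransGen.single id
    | tail h1 h2 ih =>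
      rcases ih with ih | ih
      · exact (hsub _ _ h2).imp (fun h' => ih.tail h') id
      · exact absurd h2 (hsink _ ih _)
  intro v hv
  rcases key _ _ hv with h | h
  · exact hN v h
  · obtain ⟨c, hc, -⟩ := Relation.TransGen.head'_iff.1 hv
    exact hsink _ h _ hc

lemma exists_lowest (N : PNet) (hac : N.Acyclic) {v : ℕ} (hv : v ∈ N.verts)
    (hvo : N.outdeg v ≠ 0) :
    ∃ w ∈ N.verts, N.outdeg w ≠ 0 ∧ ∀ c, N.adj w c → N.outdeg c = 0 := by
  classical
  suffices h : ∀ n (v : ℕ), v ∈ N.verts → N.outdeg v ≠ 0 →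
      (N.verts.filter fun x => Relation.TransGen N.adj v x).card ≤ n →
      ∃ w ∈ N.verts, N.outdeg w ≠ 0 ∧ ∀ c, N.adj w c → N.outdeg c = 0 by
    exact h _ v hv hvo le_rfl
  intro n
  induction n with
  | zero =>
    intro v hv hvo hcard
    obtain ⟨c, hc⟩ := out_exists hvo
    have hmem : c ∈ N.verts.filter fun x => Relation.TransGen N.adj v x :=
      Finset.mem_filter.2 ⟨adj_right hc, Relation.TransGen.single hc⟩
    have := Finset.card_pos.2 ⟨c, hmem⟩
    omega
  | succ n ih =>
    intro v hv hvo hcard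
    by_cases hall : ∀ c, N.adj v c → N.outdeg c = 0
    · exact ⟨v, hv, hvo, hall⟩
    · push_neg at hall
      obtain ⟨c, hc, hco⟩ := hall
      refine ih c (adj_right hc) hco ?_
      have hsub : (N.verts.filter fun x => Relation.TransGen N.adj c x) ⊆
          N.verts.filter fun x => Relation.TransGen N.adj v x := by
        intro x hx
        rw [Finset.mem_filter] at hx ⊢
        exact ⟨hx.1, Relation.TransGen.head hc hx.2⟩
      have hcnot : c ∉ (N.verts.filter fun x => Relation.TransGen N.adj c x) := by
        rw [Finset.mem_filter]
        rintro ⟨-, h⟩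
        exact hac c h
      have hcin : c ∈ (N.verts.filter fun x => Relation.TransGen N.adj v x) :=
        Finset.mem_filter.2 ⟨adj_right hc, Relation.TransGen.single hc⟩
      have hss : (N.verts.filter fun x => Relation.TransGen N.adj c x) ⊂
          N.verts.filter fun x => Relation.TransGen N.adj v x :=
        (Finset.ssubset_iff_of_subset hsub).2 ⟨c, hcin, hcnot⟩
      have := Finset.card_lt_card hss
      omega

def edges (N : PNet) : ℕ := ((N.verts ×ˢ N.verts).filter fun p => N.adj p.1 p.2).card

lemma mem_edges {u v : ℕ} :
    (u, v) ∈ ((N.verts ×ˢ N.verts).filter fun p => N.adj p.1 p.2) ↔ N.adj u v := by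
  simp only [Finset.mem_filter, Finset.mem_product]
  exact ⟨fun h => h.2, fun h => ⟨⟨adj_left h, adj_right h⟩, h⟩⟩

end Helpers

end PNet
namespace PNet

lemma tree_case (N : PNet) (hac : N.Acyclic) {ρ w : ℕ}
    (hρv : ρ ∈ N.verts) (hρin : N.indeg ρ = 0) (hρout : N.outdeg ρ = 2)
    (hreach : ∀ v ∈ N.verts, Relation.ReflTransGen N.adj ρ v)
    (hclass : ∀ v ∈ N.verts, v ≠ ρ →
      (N.indeg v = 1 ∧ N.outdeg v = 2) ∨ (N.indeg v = 2 ∧ N.outdeg v = 1) ∨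
      (N.indeg v = 1 ∧ N.outdeg v = 0))
    (hw : w ∈ N.verts) (hwρ : w ≠ ρ) (hwin : N.indeg w = 1) (hwout : N.outdeg w = 2)
    (hlow : ∀ c, N.adj w c → N.outdeg c = 0) :
    ∃ P : PNet, Speciation P N ∧ P.IsBinary ∧ edges P < edges N := by
  obtain ⟨a, b, hab, ha, hb⟩ := out_two_exists hwout
  have hchild : ∀ c, N.adj w c → c = a ∨ c = b := out_two hwout ha hb hab
  have hav : a ∈ N.verts := adj_right ha
  have hbv : b ∈ N.verts := adj_right hb
  have hao : N.outdeg a = 0 := hlow a ha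
  have hbo : N.outdeg b = 0 := hlow b hb
  have haρ : a ≠ ρ := fun e => no_in hρin w (e ▸ ha)
  have hbρ : b ≠ ρ := fun e => no_in hρin w (e ▸ hb)
  have hain : N.indeg a = 1 := by
    rcases hclass a hav haρ with ⟨-, h2⟩ | ⟨-, h2⟩ | ⟨h1, -⟩ <;> omega
  have hbin' : N.indeg b = 1 := by
    rcases hclass b hbv hbρ with ⟨-, h2⟩ | ⟨-, h2⟩ | ⟨h1, -⟩ <;> omega
  have hpa : ∀ u, N.adj u a → u = w := in_unique hain ha
  have hpb : ∀ u, N.adj u b → u = w := in_unique hbin' hb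
  have haw : a ≠ w := fun e => by rw [e] at hao; omega
  have hbw : b ≠ w := fun e => by rw [e] at hbo; omega
  have hnoa : ∀ c, ¬ N.adj a c := no_out hao
  have hnob : ∀ c, ¬ N.adj b c := no_out hbo
  let P : PNet :=
    { verts := N.verts \ {a, b}
      adj := fun u v => N.adj u v ∧ u ≠ a ∧ u ≠ b ∧ v ≠ a ∧ v ≠ b
      adjDec := fun u v => inferInstance
      adj_mem := by
        rintro u v ⟨h, h1, h2, h3, h4⟩
        simp only [Finset.mem_sdiff, Finset.mem_insert, Finset.mem_singleton]
        exact ⟨⟨adj_left h, by tauto⟩, adj_right h, by tauto⟩ }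
  have hPv : P.verts = N.verts \ {a, b} := rfl
  have hPadj : ∀ u v, P.adj u v ↔ (N.adj u v ∧ u ≠ a ∧ u ≠ b ∧ v ≠ a ∧ v ≠ b) :=
    fun _ _ => Iff.rfl
  have hwP : w ∈ P.verts := by
    rw [hPv]
    simp only [Finset.mem_sdiff, Finset.mem_insert, Finset.mem_singleton]
    exact ⟨hw, by tauto⟩
  have hPw0 : P.outdeg w = 0 := by
    simp only [outdeg, Finset.card_eq_zero]
    rw [Finset.filter_eq_empty_iff]
    intro x _
    rintro ⟨h, -, -, h3, h4⟩
    rcases hchild x h with rfl | rfl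
    · exact h3 rfl
    · exact h4 rfl
  have haP : a ∉ P.verts := by rw [hPv]; simp
  have hbP : b ∉ P.verts := by rw [hPv]; simp
  -- degree preservation
  have hinP : ∀ v ∈ N.verts, v ≠ a → v ≠ b → P.indeg v = N.indeg v := by
    intro v hv h1 h2
    simp only [indeg]
    congr 1
    ext u
    simp only [Finset.mem_filter, hPv, Finset.mem_sdiff, Finset.mem_insert,
      Finset.mem_singleton, hPadj]
    constructor
    · rintro ⟨-, h, -⟩
      exact ⟨adj_left h, h⟩
    · rintro ⟨hu, h⟩
      have hua : u ≠ a := fun e => hnoa v (e ▸ h)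
      have hub : u ≠ b := fun e => hnob v (e ▸ h)
      exact ⟨⟨hu, by tauto⟩, h, hua, hub, h1, h2⟩
  have houtP : ∀ v ∈ N.verts, v ≠ a → v ≠ b → v ≠ w → P.outdeg v = N.outdeg v := by
    intro v hv h1 h2 h3
    simp only [outdeg]
    congr 1
    ext c
    simp only [Finset.mem_filter, hPv, Finset.mem_sdiff, Finset.mem_insert,
      Finset.mem_singleton, hPadj]
    constructor
    · rintro ⟨-, h, -⟩
      exact ⟨adj_right h, h⟩
    · rintro ⟨hc, h⟩
      have hca : c ≠ a := fun e => h3 (hpa v (e ▸ h))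
      have hcb : c ≠ b := fun e => h3 (hpb v (e ▸ h))
      exact ⟨⟨hc, by tauto⟩, h, h1, h2, hca, hcb⟩
  refine ⟨P, ⟨w, a, b, ⟨hwP, hPw0⟩, haP, hbP, hab, ?_, ?_⟩, ⟨?_, ρ, ⟨?_, ?_⟩, ?_, ?_, ?_⟩, ?_⟩
  · -- N.verts = insert a (insert b P.verts)
    rw [hPv]
    ext x
    simp only [Finset.mem_insert, Finset.mem_sdiff, Finset.mem_singleton]
    constructor
    · intro hx
      by_cases h1 : x = a
      · exact Or.inl h1
      · by_cases h2 : x = b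
        · exact Or.inr (Or.inl h2)
        · exact Or.inr (Or.inr ⟨hx, by tauto⟩)
    · rintro (rfl | rfl | ⟨hx, -⟩) <;> assumption
  · -- adjacency iff
    intro u v
    rw [hPadj]
    constructor
    · intro h
      by_cases hva : v = a
      · subst hva; exact Or.inr (Or.inl ⟨hpa u h, rfl⟩)
      · by_cases hvb : v = b
        · subst hvb; exact Or.inr (Or.inr ⟨hpb u h, rfl⟩)
        · have hua : u ≠ a := fun e => hnoa v (e ▸ h)
          have hub : u ≠ b := fun e => hnob v (e ▸ h)
          exact Or.inl ⟨h, hua, hub, hva, hvb⟩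
    · rintro (⟨h, -⟩ | ⟨rfl, rfl⟩ | ⟨rfl, rfl⟩)
      · exact h
      · exact ha
      · exact hb
  · -- Acyclic
    exact acyclic_extend P (fun _ => False) (fun _ h => h.elim) (fun a b h => Or.inl h.1) hac
  · -- ρ ∈ P.verts
    rw [hPv]
    simp only [Finset.mem_sdiff, Finset.mem_insert, Finset.mem_singleton]
    exact ⟨hρv, by tauto⟩
  · -- P.indeg ρ = 0
    simp only [indeg, Finset.card_eq_zero]
    rw [Finset.filter_eq_empty_iff]
    intro u _
    rintro ⟨h, -⟩
    exact no_in hρin u h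
  · -- P.outdeg ρ = 2
    rw [houtP ρ hρv (Ne.symm haρ) (Ne.symm hbρ) (Ne.symm hwρ)]
    exact hρout
  · -- reachability
    have hkey : ∀ v, Relation.ReflTransGen N.adj ρ v → v ≠ a → v ≠ b →
        Relation.ReflTransGen P.adj ρ v := by
      intro v h
      induction h with
      | refl => intro _ _; exact Relation.ReflTransGen.refl
      | @tail x c hρx hxc ih =>
        intro h1 h2
        have hxa : x ≠ a := fun e => hnoa c (e ▸ hxc)
        have hxb : x ≠ b := fun e => hnob c (e ▸ hxc)
        exact (ih hxa hxb).tail ((hPadj _ _).2 ⟨hxc, hxa, hxb, h1, h2⟩)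
    intro v hv
    rw [hPv] at hv
    simp only [Finset.mem_sdiff, Finset.mem_insert, Finset.mem_singleton] at hv
    obtain ⟨hv, hv2⟩ := hv
    exact hkey v (hreach v hv) (by tauto) (by tauto)
  · -- classification
    intro v hv hvρ
    rw [hPv] at hv
    simp only [Finset.mem_sdiff, Finset.mem_insert, Finset.mem_singleton] at hv
    obtain ⟨hv, hv2⟩ := hv
    have hva : v ≠ a := by tauto
    have hvb : v ≠ b := by tauto
    by_cases hvw : v = w
    · subst hvw
      exact Or.inr (Or.inr ⟨(hinP v hv hva hvb).trans hwin, hPw0⟩)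
    · rw [hinP v hv hva hvb, houtP v hv hva hvb hvw]
      exact hclass v hv hvρ
  · -- edge count
    have hsub : ((P.verts ×ˢ P.verts).filter fun p => P.adj p.1 p.2) ⊆
        (((N.verts ×ˢ N.verts).filter fun p => N.adj p.1 p.2).erase (w, a)) := by
      rintro ⟨u, v⟩ hp
      have hadj : P.adj u v := (Finset.mem_filter.1 hp).2
      rw [hPadj] at hadj
      refine Finset.mem_erase.2 ⟨?_, mem_edges.2 hadj.1⟩
      intro e
      exact hadj.2.2.2.1 (Prod.ext_iff.1 e).2
    calc edges P ≤ (((N.verts ×ˢ N.verts).filter fun p => N.adj p.1 p.2).erase (w, a)).card :=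
          Finset.card_le_card hsub
      _ < edges N := Finset.card_erase_lt_of_mem (mem_edges.2 ha)

end PNet
namespace PNet

lemma retic_case (N : PNet) (hac : N.Acyclic) {ρ w : ℕ}
    (hρv : ρ ∈ N.verts) (hρin : N.indeg ρ = 0) (hρout : N.outdeg ρ = 2)
    (hreach : ∀ v ∈ N.verts, Relation.ReflTransGen N.adj ρ v)
    (hclass : ∀ v ∈ N.verts, v ≠ ρ →
      (N.indeg v = 1 ∧ N.outdeg v = 2) ∨ (N.indeg v = 2 ∧ N.outdeg v = 1) ∨
      (N.indeg v = 1 ∧ N.outdeg v = 0))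
    (hw : w ∈ N.verts) (hwρ : w ≠ ρ) (hwin : N.indeg w = 2) (hwout : N.outdeg w = 1)
    (hlow : ∀ c, N.adj w c → N.outdeg c = 0) :
    ∃ P M : PNet, HGT P M ∧ Extinct M N ∧ P.IsBinary ∧ edges P < edges N := by
  obtain ⟨z, hz⟩ := out_one_exists hwout
  have hzu : ∀ c, N.adj w c → c = z := out_unique hwout hz
  have hzo : N.outdeg z = 0 := hlow z hz
  have hnoz : ∀ c, ¬ N.adj z c := no_out hzo
  have hzv : z ∈ N.verts := adj_right hz
  have hzρ : z ≠ ρ := fun e => no_in hρin w (e ▸ hz)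
  have hzin : N.indeg z = 1 := by
    rcases hclass z hzv hzρ with ⟨-, h2⟩ | ⟨-, h2⟩ | ⟨h1, -⟩ <;> omega
  have hzp : ∀ u, N.adj u z → u = w := in_unique hzin hz
  obtain ⟨p1, p2, hp12, hp1, hp2⟩ := in_two_exists hwin
  have hpu : ∀ u, N.adj u w → u = p1 ∨ u = p2 := in_two hwin hp1 hp2 hp12
  have hp1v : p1 ∈ N.verts := adj_left hp1
  have hp2v : p2 ∈ N.verts := adj_left hp2
  have hp1w : p1 ≠ w := fun e => adj_ne_self hac (e ▸ hp1)
  have hp2w : p2 ≠ w := fun e => adj_ne_self hac (e ▸ hp2)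
  have hzw : z ≠ w := fun e => adj_ne_self hac (e ▸ hz)
  have hp1z : p1 ≠ z := fun e => hnoz w (e ▸ hp1)
  have hp2z : p2 ≠ z := fun e => hnoz w (e ▸ hp2)
  -- fresh labels
  set s := N.verts.sup id with hs
  have hfresh : ∀ m ∈ N.verts, m ≤ s := fun m hm => Finset.le_sup (f := id) hm
  set ℓ : ℕ := s + 1 with hℓdef
  set u₀ : ℕ := s + 2 with hu₀def
  have hℓ : ℓ ∉ N.verts := fun h => by have := hfresh _ h; omega
  have hu₀ : u₀ ∉ N.verts := fun h => by have := hfresh _ h; omega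
  have hℓu : ℓ ≠ u₀ := by omega
  have hℓw : ℓ ≠ w := fun e => hℓ (e ▸ hw)
  have hℓz : ℓ ≠ z := fun e => hℓ (e ▸ hzv)
  have hℓp1 : ℓ ≠ p1 := fun e => hℓ (e ▸ hp1v)
  have hℓp2 : ℓ ≠ p2 := fun e => hℓ (e ▸ hp2v)
  have hℓρ : ℓ ≠ ρ := fun e => hℓ (e ▸ hρv)
  have hu₀w : u₀ ≠ w := fun e => hu₀ (e ▸ hw)
  have hu₀z : u₀ ≠ z := fun e => hu₀ (e ▸ hzv)
  have hu₀p1 : u₀ ≠ p1 := fun e => hu₀ (e ▸ hp1v)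
  have hu₀p2 : u₀ ≠ p2 := fun e => hu₀ (e ▸ hp2v)
  have hu₀ρ : u₀ ≠ ρ := fun e => hu₀ (e ▸ hρv)
  -- the predecessor network P
  let P : PNet :=
    { verts := insert ℓ (N.verts \ {w})
      adj := fun x y => (N.adj x y ∧ x ≠ w ∧ y ≠ w) ∨ (x = p1 ∧ y = ℓ) ∨ (x = p2 ∧ y = z)
      adjDec := fun x y => inferInstance
      adj_mem := by
        have hmm : ∀ x ∈ N.verts, x ≠ w → x ∈ insert ℓ (N.verts \ {w}) := by
          intro x hx hxw
          exact Finset.mem_insert_of_mem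
            (Finset.mem_sdiff.2 ⟨hx, fun hm => hxw (Finset.mem_singleton.1 hm)⟩)
        rintro x y (⟨h, h1, h2⟩ | ⟨e1, e2⟩ | ⟨e1, e2⟩)
        · exact ⟨hmm x (adj_left h) h1, hmm y (adj_right h) h2⟩
        · rw [e1, e2]
          exact ⟨hmm p1 hp1v hp1w, Finset.mem_insert_self _ _⟩
        · rw [e1, e2]
          exact ⟨hmm p2 hp2v hp2w, hmm z hzv hzw⟩ }
  have hPv : P.verts = insert ℓ (N.verts \ {w}) := rfl
  have hPadj : ∀ x y, P.adj x y ↔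
      ((N.adj x y ∧ x ≠ w ∧ y ≠ w) ∨ (x = p1 ∧ y = ℓ) ∨ (x = p2 ∧ y = z)) :=
    fun _ _ => Iff.rfl
  have hadjP1 : P.adj p1 ℓ := Or.inr (Or.inl ⟨rfl, rfl⟩)
  have hadjP2 : P.adj p2 z := Or.inr (Or.inr ⟨rfl, rfl⟩)
  have hmemP : ∀ x, x ∈ N.verts → x ≠ w → x ∈ P.verts := by
    intro x hx hxw
    rw [hPv]
    simp only [Finset.mem_insert, Finset.mem_sdiff, Finset.mem_singleton]
    exact Or.inr ⟨hx, hxw⟩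
  have hℓP : ℓ ∈ P.verts := by rw [hPv]; exact Finset.mem_insert_self _ _
  have hPnoℓ : ∀ c, ¬ P.adj ℓ c := by
    rintro c (⟨h, -⟩ | ⟨e, -⟩ | ⟨e, -⟩)
    · exact hℓ (adj_left h)
    · exact hℓp1 e
    · exact hℓp2 e
  have hPnoz : ∀ c, ¬ P.adj z c := by
    rintro c (⟨h, -⟩ | ⟨e, -⟩ | ⟨e, -⟩)
    · exact hnoz c h
    · exact hp1z e.symm
    · exact hp2z e.symm
  have hPinℓ : ∀ u, P.adj u ℓ → u = p1 := by
    rintro u (⟨h, -⟩ | ⟨e, -⟩ | ⟨-, e⟩)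
    · exact absurd (adj_right h) hℓ
    · exact e
    · exact absurd e hℓz
  have hPinz : ∀ u, P.adj u z → u = p2 := by
    rintro u (⟨h, h1, -⟩ | ⟨-, e⟩ | ⟨e, -⟩)
    · exact absurd (hzp u h) h1
    · exact absurd e.symm hℓz
    · exact e
  have hPnw : ∀ x y, P.adj x y → x ≠ w ∧ y ≠ w := by
    rintro x y (⟨-, h1, h2⟩ | ⟨rfl, rfl⟩ | ⟨rfl, rfl⟩)
    · exact ⟨h1, h2⟩
    · exact ⟨hp1w, hℓw⟩
    · exact ⟨hp2w, hzw⟩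
  have hPℓ0 : P.outdeg ℓ = 0 := by
    show (P.verts.filter (fun x => P.adj ℓ x)).card = 0
    rw [Finset.card_eq_zero, Finset.filter_eq_empty_iff]
    exact fun x _ => hPnoℓ x
  have hPz0 : P.outdeg z = 0 := by
    show (P.verts.filter (fun x => P.adj z x)).card = 0
    rw [Finset.card_eq_zero, Finset.filter_eq_empty_iff]
    exact fun x _ => hPnoz x
  have hzP : z ∈ P.verts := hmemP z hzv hzw
  have hu₀P : u₀ ∉ P.verts := by
    rw [hPv]
    intro hmem
    rcases Finset.mem_insert.1 hmem with e | hmem2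
    · exact hℓu e.symm
    · exact hu₀ (Finset.mem_sdiff.1 hmem2).1
  have hwPn : w ∉ P.verts := by
    rw [hPv]
    intro hmem
    rcases Finset.mem_insert.1 hmem with e | hmem2
    · exact hℓw e.symm
    · exact (Finset.mem_sdiff.1 hmem2).2 (Finset.mem_singleton.2 rfl)
  -- the intermediate network M
  let M : PNet :=
    { verts := insert u₀ (insert w P.verts)
      adj := fun x y => (P.adj x y ∧ y ≠ ℓ ∧ y ≠ z) ∨ (x = p1 ∧ y = u₀) ∨ (x = p2 ∧ y = w) ∨
        (x = u₀ ∧ y = ℓ) ∨ (x = w ∧ y = z) ∨ (x = u₀ ∧ y = w)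
      adjDec := fun x y => inferInstance
      adj_mem := by
        rintro x y (⟨h, -⟩ | ⟨e1, e2⟩ | ⟨e1, e2⟩ | ⟨e1, e2⟩ | ⟨e1, e2⟩ | ⟨e1, e2⟩)
        · obtain ⟨h1, h2⟩ := P.adj_mem _ _ h
          exact ⟨Finset.mem_insert_of_mem (Finset.mem_insert_of_mem h1),
            Finset.mem_insert_of_mem (Finset.mem_insert_of_mem h2)⟩
        · rw [e1, e2]
          exact ⟨Finset.mem_insert_of_mem (Finset.mem_insert_of_mem (hmemP p1 hp1v hp1w)),
            Finset.mem_insert_self _ _⟩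
        · rw [e1, e2]
          exact ⟨Finset.mem_insert_of_mem (Finset.mem_insert_of_mem (hmemP p2 hp2v hp2w)),
            Finset.mem_insert_of_mem (Finset.mem_insert_self _ _)⟩
        · rw [e1, e2]
          exact ⟨Finset.mem_insert_self _ _,
            Finset.mem_insert_of_mem (Finset.mem_insert_of_mem hℓP)⟩
        · rw [e1, e2]
          exact ⟨Finset.mem_insert_of_mem (Finset.mem_insert_self _ _),
            Finset.mem_insert_of_mem (Finset.mem_insert_of_mem hzP)⟩
        · rw [e1, e2]
          exact ⟨Finset.mem_insert_self _ _,
            Finset.mem_insert_of_mem (Finset.mem_insert_self _ _)⟩ }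
  have hMadj : ∀ x y, M.adj x y ↔
      ((P.adj x y ∧ y ≠ ℓ ∧ y ≠ z) ∨ (x = p1 ∧ y = u₀) ∨ (x = p2 ∧ y = w) ∨
        (x = u₀ ∧ y = ℓ) ∨ (x = w ∧ y = z) ∨ (x = u₀ ∧ y = w)) := fun _ _ => Iff.rfl
  have hMv : M.verts = insert u₀ (insert w P.verts) := rfl
  have hℓM : ℓ ∈ M.verts :=
    Finset.mem_insert_of_mem (Finset.mem_insert_of_mem hℓP)
  have hMℓ0 : M.outdeg ℓ = 0 := by
    show (M.verts.filter (fun x => M.adj ℓ x)).card = 0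
    rw [Finset.card_eq_zero, Finset.filter_eq_empty_iff]
    intro y _
    rintro (⟨h, -⟩ | ⟨e, -⟩ | ⟨e, -⟩ | ⟨e, -⟩ | ⟨e, -⟩ | ⟨e, -⟩)
    · exact hPnoℓ y h
    · exact hℓp1 e
    · exact hℓp2 e
    · exact hℓu e
    · exact hℓw e
    · exact hℓu e
  refine ⟨P, M, ?_, ?_, ?_, ?_⟩
  · -- HGT P M
    exact ⟨ℓ, z, u₀, w, p1, p2, hℓz, ⟨hℓP, hPℓ0⟩, ⟨hzP, hPz0⟩,
      Or.inr (Or.inl ⟨rfl, rfl⟩), Or.inr (Or.inr ⟨rfl, rfl⟩),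
      hu₀P, hwPn, hu₀w, rfl, fun _ _ => Iff.rfl⟩
  · -- Extinct M N
    refine ⟨ℓ, u₀, w, ⟨hℓM, hMℓ0⟩, Or.inr (Or.inr (Or.inr (Or.inl ⟨rfl, rfl⟩))),
      Or.inr (Or.inr (Or.inr (Or.inr (Or.inr ⟨rfl, rfl⟩)))), hℓw.symm,
      Or.inr ⟨p1, Or.inr (Or.inl ⟨rfl, rfl⟩), ?_, ?_⟩⟩
    · -- N.verts = M.verts \ {ℓ, u₀}
      rw [hMv, hPv]
      ext x
      rw [Finset.mem_sdiff, Finset.mem_insert, Finset.mem_insert, Finset.mem_insert,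
        Finset.mem_sdiff, Finset.mem_insert, Finset.mem_singleton, Finset.mem_singleton]
      constructor
      · intro hx
        have h1 : x ≠ ℓ := fun e => hℓ (e ▸ hx)
        have h2 : x ≠ u₀ := fun e => hu₀ (e ▸ hx)
        by_cases hxw : x = w
        · exact ⟨Or.inr (Or.inl hxw), fun h => h.elim h1 h2⟩
        · exact ⟨Or.inr (Or.inr (Or.inr ⟨hx, hxw⟩)), fun h => h.elim h1 h2⟩
      · rintro ⟨(rfl | rfl | rfl | ⟨hx, -⟩), hno⟩
        · exact absurd (Or.inr rfl) hno
        · exact hw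
        · exact absurd (Or.inl rfl) hno
        · exact hx
    · -- adjacency
      intro u v
      constructor
      · intro h
        by_cases hvw : v = w
        · subst hvw
          rcases hpu u h with rfl | rfl
          · exact Or.inr ⟨rfl, rfl⟩
          · exact Or.inl ⟨Or.inr (Or.inr (Or.inl ⟨rfl, rfl⟩)), hu₀p2.symm, hu₀w.symm, hℓw.symm⟩
        · by_cases huw : u = w
          · subst huw
            have := hzu v h
            subst this
            exact Or.inl ⟨Or.inr (Or.inr (Or.inr (Or.inr (Or.inl ⟨rfl, rfl⟩)))),
              hu₀w.symm, hu₀z.symm, hℓz.symm⟩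
          · by_cases hvz : v = z
            · subst hvz
              exact absurd (hzp u h) huw
            · have huv : u ∈ N.verts := adj_left h
              have hvv : v ∈ N.verts := adj_right h
              exact Or.inl ⟨Or.inl ⟨Or.inl ⟨h, huw, hvw⟩,
                fun e => hℓ (e ▸ hvv), hvz⟩,
                fun e => hu₀ (e ▸ huv), fun e => hu₀ (e ▸ hvv), fun e => hℓ (e ▸ hvv)⟩
      · rintro (⟨hM, hu, hv1, hv2⟩ | ⟨rfl, rfl⟩)
        · rcases hM with ⟨hP, -, hvz⟩ | ⟨-, e⟩ | ⟨rfl, rfl⟩ | ⟨rfl, -⟩ | ⟨rfl, rfl⟩ | ⟨e, -⟩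
          · rcases hP with ⟨hN, -, -⟩ | ⟨-, e⟩ | ⟨-, e⟩
            · exact hN
            · exact absurd e hv2
            · exact absurd e hvz
          · exact absurd e hv1
          · exact hp2
          · exact absurd rfl hu
          · exact hz
          · exact absurd e hu
        · exact hp1
  · -- P.IsBinary
    -- degree preservation
    have houteq : ∀ u ∈ N.verts, u ≠ w → P.outdeg u = N.outdeg u := by
      intro u hu huw
      by_cases h1 : u = p1
      · rw [h1]
        have hPc : P.verts.filter (fun y => P.adj p1 y) =
            insert ℓ ((N.verts.filter (fun y => N.adj p1 y)).erase w) := by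
          ext y
          constructor
          · intro hy
            obtain ⟨hyv, hadj⟩ := Finset.mem_filter.1 hy
            rcases (hPadj p1 y).1 hadj with ⟨hN, -, hyw⟩ | ⟨-, e⟩ | ⟨e, -⟩
            · exact Finset.mem_insert_of_mem
                (Finset.mem_erase.2 ⟨hyw, Finset.mem_filter.2 ⟨adj_right hN, hN⟩⟩)
            · rw [e]; exact Finset.mem_insert_self _ _
            · exact absurd e hp12
          · intro hy
            rcases Finset.mem_insert.1 hy with e | hy2
            · rw [e]; exact Finset.mem_filter.2 ⟨hℓP, hadjP1⟩
            · obtain ⟨hyw, hy3⟩ := Finset.mem_erase.1 hy2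
              obtain ⟨hyv, hadj⟩ := Finset.mem_filter.1 hy3
              exact Finset.mem_filter.2 ⟨hmemP y hyv hyw,
                (hPadj p1 y).2 (Or.inl ⟨hadj, hp1w, hyw⟩)⟩
        show (P.verts.filter (fun y => P.adj p1 y)).card =
          (N.verts.filter (fun y => N.adj p1 y)).card
        rw [hPc, Finset.card_insert_of_notMem
          (fun hm => hℓ (Finset.mem_filter.1 (Finset.mem_of_mem_erase hm)).1),
          Finset.card_erase_of_mem (Finset.mem_filter.2 ⟨hw, hp1⟩)]
        have hpos : 0 < (N.verts.filter (fun y => N.adj p1 y)).card :=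
          Finset.card_pos.2 ⟨w, Finset.mem_filter.2 ⟨hw, hp1⟩⟩
        exact Nat.sub_add_cancel hpos
      · by_cases h2 : u = p2
        · rw [h2]
          have hPc : P.verts.filter (fun y => P.adj p2 y) =
              insert z ((N.verts.filter (fun y => N.adj p2 y)).erase w) := by
            ext y
            constructor
            · intro hy
              obtain ⟨hyv, hadj⟩ := Finset.mem_filter.1 hy
              rcases (hPadj p2 y).1 hadj with ⟨hN, -, hyw⟩ | ⟨e, -⟩ | ⟨-, e⟩
              · exact Finset.mem_insert_of_mem
                  (Finset.mem_erase.2 ⟨hyw, Finset.mem_filter.2 ⟨adj_right hN, hN⟩⟩)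
              · exact absurd e.symm hp12
              · rw [e]; exact Finset.mem_insert_self _ _
            · intro hy
              rcases Finset.mem_insert.1 hy with e | hy2
              · rw [e]; exact Finset.mem_filter.2 ⟨hzP, hadjP2⟩
              · obtain ⟨hyw, hy3⟩ := Finset.mem_erase.1 hy2
                obtain ⟨hyv, hadj⟩ := Finset.mem_filter.1 hy3
                exact Finset.mem_filter.2 ⟨hmemP y hyv hyw,
                  (hPadj p2 y).2 (Or.inl ⟨hadj, hp2w, hyw⟩)⟩
          show (P.verts.filter (fun y => P.adj p2 y)).card =
            (N.verts.filter (fun y => N.adj p2 y)).card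
          rw [hPc, Finset.card_insert_of_notMem
            (fun hm => hp2w (hzp p2 (Finset.mem_filter.1 (Finset.mem_of_mem_erase hm)).2)),
            Finset.card_erase_of_mem (Finset.mem_filter.2 ⟨hw, hp2⟩)]
          have hpos : 0 < (N.verts.filter (fun y => N.adj p2 y)).card :=
            Finset.card_pos.2 ⟨w, Finset.mem_filter.2 ⟨hw, hp2⟩⟩
          exact Nat.sub_add_cancel hpos
        · have hPc : P.verts.filter (fun y => P.adj u y) =
              N.verts.filter (fun y => N.adj u y) := by
            ext y
            constructor
            · intro hy
              obtain ⟨hyv, hadj⟩ := Finset.mem_filter.1 hy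
              rcases (hPadj u y).1 hadj with ⟨hN, -⟩ | ⟨e, -⟩ | ⟨e, -⟩
              · exact Finset.mem_filter.2 ⟨adj_right hN, hN⟩
              · exact absurd e h1
              · exact absurd e h2
            · intro hy
              obtain ⟨hyv, hadj⟩ := Finset.mem_filter.1 hy
              have hyw : y ≠ w := by
                rintro rfl
                rcases hpu u hadj with e | e
                · exact h1 e
                · exact h2 e
              exact Finset.mem_filter.2 ⟨hmemP y hyv hyw,
                (hPadj u y).2 (Or.inl ⟨hadj, huw, hyw⟩)⟩
          show (P.verts.filter (fun y => P.adj u y)).card =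
            (N.verts.filter (fun y => N.adj u y)).card
          rw [hPc]
    have hineq : ∀ u ∈ N.verts, u ≠ w → P.indeg u = N.indeg u := by
      intro u hu huw
      by_cases h1 : u = z
      · rw [h1]
        have hPc : P.verts.filter (fun x => P.adj x z) = {p2} := by
          ext x
          constructor
          · intro hx
            rw [Finset.mem_singleton]
            exact hPinz x (Finset.mem_filter.1 hx).2
          · intro hx
            rw [Finset.mem_singleton] at hx
            rw [hx]
            exact Finset.mem_filter.2 ⟨hmemP p2 hp2v hp2w, hadjP2⟩
        show (P.verts.filter (fun x => P.adj x z)).card =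
          (N.verts.filter (fun x => N.adj x z)).card
        rw [hPc, Finset.card_singleton]
        have : N.indeg z = (N.verts.filter (fun x => N.adj x z)).card := rfl
        omega
      · have hPc : P.verts.filter (fun x => P.adj x u) =
            N.verts.filter (fun x => N.adj x u) := by
          ext x
          constructor
          · intro hx
            obtain ⟨hxv, hadj⟩ := Finset.mem_filter.1 hx
            rcases (hPadj x u).1 hadj with ⟨hN, -⟩ | ⟨-, e⟩ | ⟨-, e⟩
            · exact Finset.mem_filter.2 ⟨adj_left hN, hN⟩
            · exact absurd (e ▸ hu) hℓ
            · exact absurd e h1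
          · intro hx
            obtain ⟨hxv, hadj⟩ := Finset.mem_filter.1 hx
            have hxw : x ≠ w := by
              rintro rfl
              exact h1 (hzu u hadj)
            exact Finset.mem_filter.2 ⟨hmemP x hxv hxw,
              (hPadj x u).2 (Or.inl ⟨hadj, hxw, huw⟩)⟩
        show (P.verts.filter (fun x => P.adj x u)).card =
          (N.verts.filter (fun x => N.adj x u)).card
        rw [hPc]
    refine ⟨?_, ρ, ⟨?_, ?_⟩, ?_, ?_, ?_⟩
    · -- Acyclic
      refine acyclic_extend P (fun b => b = ℓ ∨ b = z) ?_ ?_ hac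
      · rintro b (rfl | rfl) c h
        · exact hPnoℓ c h
        · exact hPnoz c h
      · rintro a b (⟨h, -⟩ | ⟨-, rfl⟩ | ⟨-, rfl⟩)
        · exact Or.inl h
        · exact Or.inr (Or.inl rfl)
        · exact Or.inr (Or.inr rfl)
    · exact hmemP ρ hρv (Ne.symm hwρ)
    · -- P.indeg ρ = 0
      show (P.verts.filter (fun x => P.adj x ρ)).card = 0
      rw [Finset.card_eq_zero, Finset.filter_eq_empty_iff]
      intro x _
      rintro (⟨h, -⟩ | ⟨-, e⟩ | ⟨-, e⟩)
      · exact no_in hρin x h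
      · exact hℓρ e.symm
      · exact hzρ e.symm
    · -- P.outdeg ρ = 2
      rw [houteq ρ hρv (Ne.symm hwρ)]
      exact hρout
    · -- reachability
      have hkey : ∀ v, Relation.ReflTransGen N.adj ρ v → v ≠ w → v ≠ z →
          Relation.ReflTransGen P.adj ρ v := by
        intro v h
        induction h with
        | refl => intro _ _; exact Relation.ReflTransGen.refl
        | @tail x c hρx hxc ih =>
          intro h1 h2
          have hxw : x ≠ w := fun e => h2 (hzu c (e ▸ hxc))
          have hxz : x ≠ z := fun e => hnoz c (e ▸ hxc)
          exact (ih hxw hxz).tail (Or.inl ⟨hxc, hxw, h1⟩)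
      intro v hv
      rw [hPv] at hv
      simp only [Finset.mem_insert, Finset.mem_sdiff, Finset.mem_singleton] at hv
      rcases hv with rfl | ⟨hv, hvw⟩
      · exact (hkey p1 (hreach p1 hp1v) hp1w hp1z).tail (Or.inr (Or.inl ⟨rfl, rfl⟩))
      · by_cases hvz : v = z
        · subst hvz
          exact (hkey p2 (hreach p2 hp2v) hp2w hp2z).tail (Or.inr (Or.inr ⟨rfl, rfl⟩))
        · exact hkey v (hreach v hv) hvw hvz
    · -- classification
      intro v hv hvρ
      rw [hPv] at hv
      simp only [Finset.mem_insert, Finset.mem_sdiff, Finset.mem_singleton] at hv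
      rcases hv with rfl | ⟨hv, hvw⟩
      · -- v = ℓ : leaf
        refine Or.inr (Or.inr ⟨?_, hPℓ0⟩)
        have hPc : P.verts.filter (fun x => P.adj x ℓ) = {p1} := by
          ext x
          constructor
          · intro hx
            rw [Finset.mem_singleton]
            exact hPinℓ x (Finset.mem_filter.1 hx).2
          · intro hx
            rw [Finset.mem_singleton] at hx
            rw [hx]
            exact Finset.mem_filter.2 ⟨hmemP p1 hp1v hp1w, hadjP1⟩
        show (P.verts.filter (fun x => P.adj x ℓ)).card = 1
        rw [hPc, Finset.card_singleton]
      · rw [hineq v hv hvw, houteq v hv hvw]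
        exact hclass v hv hvρ
  · -- edges P < edges N
    set f : ℕ × ℕ → ℕ × ℕ := fun pr => if pr.2 = ℓ ∨ pr.2 = z then (pr.1, w) else pr with hf
    have hEP : ∀ pr : ℕ × ℕ, pr ∈ ((P.verts ×ˢ P.verts).filter fun p => P.adj p.1 p.2) →
        P.adj pr.1 pr.2 := fun pr h => (Finset.mem_filter.1 h).2
    have hmaps : ∀ pr ∈ ((P.verts ×ˢ P.verts).filter fun p => P.adj p.1 p.2),
        f pr ∈ (((N.verts ×ˢ N.verts).filter fun p => N.adj p.1 p.2).erase (w, z)) := by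
      rintro ⟨u, v⟩ hpr
      have hadj : P.adj u v := hEP _ hpr
      by_cases hc : v = ℓ ∨ v = z
      · rw [hf]
        simp only [if_pos hc]
        rcases hc with rfl | rfl
        · have hup : u = p1 := hPinℓ u hadj
          subst hup
          exact Finset.mem_erase.2 ⟨fun e => hp1w (Prod.ext_iff.1 e).1, mem_edges.2 hp1⟩
        · have hup : u = p2 := hPinz u hadj
          subst hup
          exact Finset.mem_erase.2 ⟨fun e => hp2w (Prod.ext_iff.1 e).1, mem_edges.2 hp2⟩
      · rw [hf]
        simp only [if_neg hc]
        push_neg at hc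
        rcases (hPadj u v).1 hadj with ⟨hN, huw, -⟩ | ⟨-, e⟩ | ⟨-, e⟩
        · exact Finset.mem_erase.2 ⟨fun e => huw (Prod.ext_iff.1 e).1, mem_edges.2 hN⟩
        · exact absurd e hc.1
        · exact absurd e hc.2
    have hinj : Set.InjOn f ↑((P.verts ×ˢ P.verts).filter fun p => P.adj p.1 p.2) := by
      rintro ⟨u1, v1⟩ h1 ⟨u2, v2⟩ h2 heq
      have ha1 : P.adj u1 v1 := hEP _ (Finset.mem_coe.1 h1)
      have ha2 : P.adj u2 v2 := hEP _ (Finset.mem_coe.1 h2)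
      by_cases c1 : v1 = ℓ ∨ v1 = z <;> by_cases c2 : v2 = ℓ ∨ v2 = z
      · rw [hf] at heq
        simp only [if_pos c1, if_pos c2] at heq
        obtain ⟨e1, -⟩ := Prod.ext_iff.1 heq
        rcases c1 with rfl | rfl <;> rcases c2 with rfl | rfl
        · rw [hPinℓ u1 ha1, hPinℓ u2 ha2]
        · exact absurd (by rw [hPinℓ u1 ha1] at e1; rw [hPinz u2 ha2] at e1; exact e1) hp12
        · exact absurd (by rw [hPinz u1 ha1] at e1; rw [hPinℓ u2 ha2] at e1; exact e1.symm) hp12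
        · rw [hPinz u1 ha1, hPinz u2 ha2]
      · rw [hf] at heq
        simp only [if_pos c1, if_neg c2] at heq
        exact absurd ((Prod.ext_iff.1 heq).2.symm) (hPnw u2 v2 ha2).2
      · rw [hf] at heq
        simp only [if_neg c1, if_pos c2] at heq
        exact absurd ((Prod.ext_iff.1 heq).2) (hPnw u1 v1 ha1).2
      · rw [hf] at heq
        simpa only [if_neg c1, if_neg c2] using heq
    calc edges P ≤ (((N.verts ×ˢ N.verts).filter fun p => N.adj p.1 p.2).erase (w, z)).card :=
          Finset.card_le_card_of_injOn f hmaps hinj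
      _ < edges N := Finset.card_erase_lt_of_mem (mem_edges.2 hz)

end PNet
namespace PNet

theorem generate : ∀ (n : ℕ) (N : PNet), edges N ≤ n → N.IsBinary →
    ∃ N₀, SingleLeaf N₀ ∧
      Relation.ReflTransGen (fun A B => Speciation A B ∨ HGT A B ∨ Extinct A B) N₀ N := by
  intro n
  induction n using Nat.strong_induction_on with
  | _ n ih =>
    intro N hle hbin
    obtain ⟨hac, ρ, hρ, hρ2, hreach, hclass⟩ := hbin
    have hρv : ρ ∈ N.verts := hρ.1
    have hρin : N.indeg ρ = 0 := hρ.2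
    obtain ⟨w, hw, hwo, hlow⟩ := exists_lowest N hac hρv (by omega)
    by_cases hwρ : w = ρ
    · -- base case : whole network is root with two leaf children
      subst hwρ
      obtain ⟨a, b, hab, ha, hb⟩ := out_two_exists hρ2
      have hchild : ∀ c, N.adj w c → c = a ∨ c = b := out_two hρ2 ha hb hab
      have hav : a ∈ N.verts := adj_right ha
      have hbv : b ∈ N.verts := adj_right hb
      have hao : N.outdeg a = 0 := hlow a ha
      have hbo : N.outdeg b = 0 := hlow b hb
      have haw : a ≠ w := fun e => adj_ne_self hac (e ▸ ha)
      have hbw : b ≠ w := fun e => adj_ne_self hac (e ▸ hb)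
      have hsub : ∀ v, Relation.ReflTransGen N.adj w v → v = w ∨ v = a ∨ v = b := by
        intro v h
        induction h with
        | refl => exact Or.inl rfl
        | @tail x c hwx hxc ih2 =>
          rcases ih2 with rfl | rfl | rfl
          · exact Or.inr (hchild c hxc)
          · exact absurd hxc (no_out hao c)
          · exact absurd hxc (no_out hbo c)
      let N₀ : PNet :=
        { verts := {w}
          adj := fun _ _ => False
          adjDec := fun _ _ => inferInstance
          adj_mem := fun _ _ h => h.elim }
      have hN₀ : SingleLeaf N₀ := ⟨w, rfl, fun _ _ h => h⟩
      have hspec : Speciation N₀ N := by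
        refine ⟨w, a, b, ⟨Finset.mem_singleton_self w, ?_⟩, ?_, ?_, hab, ?_, ?_⟩
        · show (N₀.verts.filter (fun x => N₀.adj w x)).card = 0
          rw [Finset.card_eq_zero, Finset.filter_eq_empty_iff]
          exact fun x _ h => h
        · rw [Finset.mem_singleton]; exact haw
        · rw [Finset.mem_singleton]; exact hbw
        · ext x
          rw [Finset.mem_insert, Finset.mem_insert, Finset.mem_singleton]
          constructor
          · intro hx
            rcases hsub x (hreach x hx) with e | e | e
            · exact Or.inr (Or.inr e)
            · exact Or.inl e
            · exact Or.inr (Or.inl e)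
          · rintro (rfl | rfl | rfl) <;> assumption
        · intro u v
          constructor
          · intro h
            have huv : u ∈ N.verts := adj_left h
            rcases hsub u (hreach u huv) with rfl | rfl | rfl
            · rcases hchild v h with rfl | rfl
              · exact Or.inr (Or.inl ⟨rfl, rfl⟩)
              · exact Or.inr (Or.inr ⟨rfl, rfl⟩)
            · exact absurd h (no_out hao v)
            · exact absurd h (no_out hbo v)
          · rintro (h | ⟨rfl, rfl⟩ | ⟨rfl, rfl⟩)
            · exact h.elim
            · exact ha
            · exact hb
      exact ⟨N₀, hN₀, Relation.ReflTransGen.single (Or.inl hspec)⟩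
    · rcases hclass w hw hwρ with ⟨h1, h2⟩ | ⟨h1, h2⟩ | ⟨h1, h2⟩
      · -- tree node
        obtain ⟨P, hspec, hPbin, hPe⟩ :=
          tree_case N hac hρv hρin hρ2 hreach hclass hw hwρ h1 h2 hlow
        obtain ⟨N₀, h0, hr⟩ := ih (edges P) (by omega) P le_rfl hPbin
        exact ⟨N₀, h0, hr.tail (Or.inl hspec)⟩
      · -- reticulation
        obtain ⟨P, M, hhgt, hext, hPbin, hPe⟩ :=
          retic_case N hac hρv hρin hρ2 hreach hclass hw hwρ h1 h2 hlow
        obtain ⟨N₀, h0, hr⟩ := ih (edges P) (by omega) P le_rfl hPbin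
        exact ⟨N₀, h0, (hr.tail (Or.inr (Or.inl hhgt))).tail (Or.inr (Or.inr hext))⟩
      · exact absurd h2 hwo

end PNet

open PNet in
/-- Any binary phylogenetic network can be generated (up to isomorphism) from
the single-leaf network by speciation, n-type (HGT) reticulation, and
extinction events. -/
theorem stmt14 (N : PNet) (hbin : N.IsBinary) :
    ∃ N₀ M, SingleLeaf N₀ ∧
      Relation.ReflTransGen
        (fun A B => Speciation A B ∨ HGT A B ∨ Extinct A B) N₀ M ∧
      Iso M N := by
  obtain ⟨N₀, h0, hr⟩ := PNet.generate (edges N) N le_rfl hbin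
  exact ⟨N₀, N, h0, hr, ⟨id, Set.bijOn_id _, fun _ _ _ _ => Iff.rfl⟩⟩
end

section
/- In a binary tree-child phylogenetic network with n leaves, the number of reticulation nodes is at most n - 1. -/
open PNet in
/-- In a binary tree-child phylogenetic network with `n` leaves, the number of
reticulation nodes is at most `n - 1`. -/
theorem stmt16 (N : PNet) (n r : ℕ) (hbin : N.IsBinary) (htc : N.TreeChild)
    (hn : n = (N.verts.filter fun v => N.outdeg v = 0).card)
    (hr : r = (N.verts.filter fun v => N.indeg v = 2).card) :
    r ≤ n - 1 := by
  classical
  obtain ⟨hac, ρ, ⟨hρV, hρin⟩, hρout, hreach, hclass⟩ := hbin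
  set q : ℕ := (N.verts.filter fun v => N.outdeg v = 2).card with hq
  -- out-degree takes values in {0,1,2}
  have houtv : ∀ v ∈ N.verts, N.outdeg v = 0 ∨ N.outdeg v = 1 ∨ N.outdeg v = 2 := by
    intro v hv
    by_cases h : v = ρ
    · subst h; right; right; exact hρout
    · rcases hclass v hv h with ⟨_, h2⟩ | ⟨_, h2⟩ | ⟨_, h2⟩ <;> simp [h2]
  -- pointwise formulas for degrees
  have hin_pt : ∀ v ∈ N.verts,
      N.indeg v = (if N.indeg v = 2 then 1 else 0) + (if v = ρ then 0 else 1) := by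
    intro v hv
    by_cases h : v = ρ
    · subst h; simp [hρin]
    · rcases hclass v hv h with ⟨h1, _⟩ | ⟨h1, _⟩ | ⟨h1, _⟩ <;> simp [h1, h]
  have hout_pt : ∀ v ∈ N.verts,
      N.outdeg v = (if N.outdeg v = 2 then 1 else 0) + (if N.outdeg v = 0 then 0 else 1) := by
    intro v hv
    rcases houtv v hv with h | h | h <;> simp [h]
  -- double counting of edges
  have hsum : ∑ v ∈ N.verts, N.indeg v = ∑ v ∈ N.verts, N.outdeg v := by
    unfold PNet.indeg PNet.outdeg
    simp only [Finset.card_filter]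
    exact Finset.sum_comm
  -- sum of indegrees
  have hL : ∑ v ∈ N.verts, N.indeg v
      = r + (N.verts.filter fun v => ¬ v = ρ).card := by
    rw [Finset.sum_congr rfl hin_pt, Finset.sum_add_distrib]
    congr 1
    · rw [hr, Finset.card_filter]
    · rw [Finset.card_filter]
      exact Finset.sum_congr rfl (fun v _ => by by_cases h : v = ρ <;> simp [h])
  -- sum of outdegrees
  have hR : ∑ v ∈ N.verts, N.outdeg v
      = q + (N.verts.filter fun v => ¬ N.outdeg v = 0).card := by
    rw [Finset.sum_congr rfl hout_pt, Finset.sum_add_distrib]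
    congr 1
    · rw [hq, Finset.card_filter]
    · rw [Finset.card_filter]
      exact Finset.sum_congr rfl (fun v _ => by by_cases h : N.outdeg v = 0 <;> simp [h])
  -- cardinalities
  have hcard1 : (N.verts.filter fun v => v = ρ).card
      + (N.verts.filter fun v => ¬ v = ρ).card = N.verts.card :=
    Finset.card_filter_add_card_filter_not _
  have hcard2 : (N.verts.filter fun v => N.outdeg v = 0).card
      + (N.verts.filter fun v => ¬ N.outdeg v = 0).card = N.verts.card :=
    Finset.card_filter_add_card_filter_not _
  have hρone : (N.verts.filter fun v => v = ρ).card = 1 := by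
    have : (N.verts.filter fun v => v = ρ) = {ρ} := by
      ext x
      simp only [Finset.mem_filter, Finset.mem_singleton]
      constructor
      · rintro ⟨_, h⟩; exact h
      · rintro rfl; exact ⟨hρV, rfl⟩
    rw [this, Finset.card_singleton]
  -- key equation: r + n = q + 1
  have hkey : r + n = q + 1 := by
    rw [hL, hR] at hsum
    omega
  -- edges into reticulations count 2r
  have h2r : 2 * r = ∑ v ∈ N.verts,
      (N.verts.filter fun c => N.adj v c ∧ N.indeg c = 2).card := by
    simp only [Finset.card_filter]
    rw [Finset.sum_comm]
    have hpt : ∀ c ∈ N.verts,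
        (∑ v ∈ N.verts, if N.adj v c ∧ N.indeg c = 2 then 1 else 0)
          = if N.indeg c = 2 then 2 else 0 := by
      intro c hc
      by_cases h : N.indeg c = 2
      · simp only [h, and_true, if_pos]
        rw [← Finset.card_filter]
        exact h
      · simp [h]
    rw [Finset.sum_congr rfl hpt, ← Finset.sum_filter, Finset.sum_const, smul_eq_mul, ← hr,
      mul_comm]
  -- tree-child bound: each vertex has at most one reticulation child,
  -- and only out-degree-2 vertices can have one
  have hrc : ∀ v ∈ N.verts,
      (N.verts.filter fun c => N.adj v c ∧ N.indeg c = 2).card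
        ≤ if N.outdeg v = 2 then 1 else 0 := by
    intro v hv
    have hsub : (N.verts.filter fun c => N.adj v c ∧ N.indeg c = 2)
        ⊆ N.verts.filter fun c => N.adj v c := by
      intro x hx
      rw [Finset.mem_filter] at hx ⊢
      exact ⟨hx.1, hx.2.1⟩
    rcases houtv v hv with h | h | h
    · rw [if_neg (by omega)]
      have := Finset.card_le_card hsub
      unfold PNet.outdeg at h
      omega
    all_goals {
      obtain ⟨c, hadj, hcnr⟩ := htc v hv (by omega)
      have hcV : c ∈ N.verts := (N.adj_mem v c hadj).2
      have hcmem : c ∈ N.verts.filter fun w => N.adj v w := by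
        rw [Finset.mem_filter]; exact ⟨hcV, hadj⟩
      have hsub2 : (N.verts.filter fun w => N.adj v w ∧ N.indeg w = 2)
          ⊆ (N.verts.filter fun w => N.adj v w).erase c := by
        intro x hx
        rw [Finset.mem_filter] at hx
        rw [Finset.mem_erase]
        refine ⟨?_, hsub (by rw [Finset.mem_filter]; exact ⟨hx.1, hx.2⟩)⟩
        rintro rfl
        exact hcnr hx.2.2
      have := Finset.card_le_card hsub2
      rw [Finset.card_erase_of_mem hcmem] at this
      have hod : (N.verts.filter fun w => N.adj v w).card = N.outdeg v := rfl
      rw [hod, h] at this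
      split <;> omega
    }
  have hbound : 2 * r ≤ q := by
    rw [h2r]
    calc ∑ v ∈ N.verts, (N.verts.filter fun c => N.adj v c ∧ N.indeg c = 2).card
        ≤ ∑ v ∈ N.verts, (if N.outdeg v = 2 then 1 else 0) := Finset.sum_le_sum hrc
      _ = q := by rw [hq, Finset.card_filter]
  omega
end
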